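/- arXiv:1903.03353 — 10 statements merged into one kernel-verified Lean document; each statement's English description precedes it below -/
import Mathlib

section
/- Let A be an n×n pattern matrix and B an n×m pattern matrix. Let Ā be the pattern matrix obtained from A by keeping all off-diagonal entries and replacing each diagonal entry A_ii by ∗ if A_ii = 0 and by ? otherwise. Then the structured system (A,B) is strongly structurally controllable if and only if both of the following hold: (1) the n×(n+m) pattern matrix [A B] has full row rank, and (2) the n×(n+m) pattern matrix [Ā B] has full row rank. -/
/-- The symbols of a pattern matrix: fixed zero (`0`), arbitrary nonzero (`∗`),
and arbitrary (`?`). -/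
inductive PSym : Type
  | zero
  | star
  | arb
  deriving DecidableEq

open Matrix

/-- The pattern class of a pattern matrix: real matrices that are `0` where the pattern
is `0`, nonzero where the pattern is `∗`, and unrestricted where the pattern is `?`. -/
def PatternClass {R C : Type*} (M : Matrix R C PSym) : Set (Matrix R C ℝ) :=
  {A | ∀ i j, (M i j = PSym.zero → A i j = 0) ∧ (M i j = PSym.star → A i j ≠ 0)}

/-- A pattern matrix has full row rank if every member of its pattern class
has full row rank. -/
def PatternFullRowRank {R C : Type*} [Fintype R] [Fintype C] (M : Matrix R C PSym) : Prop :=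
  ∀ A ∈ PatternClass M, A.rank = Fintype.card R

/-- Hautus test: `(A, B)` is controllable iff `[A - λI, B]` has rank `n` for all `λ ∈ ℂ`. -/
def Controllable {n m : ℕ} (A : Matrix (Fin n) (Fin n) ℝ) (B : Matrix (Fin n) (Fin m) ℝ) : Prop :=
  ∀ l : ℂ, (Matrix.fromCols (A.map (Complex.ofReal) - l • (1 : Matrix (Fin n) (Fin n) ℂ))
      (B.map (Complex.ofReal))).rank = n

/-- Hautus test for stabilizability: `[A - λI, B]` has rank `n` for all `λ` with `Re λ ≥ 0`. -/
def Stabilizable {n m : ℕ} (A : Matrix (Fin n) (Fin n) ℝ) (B : Matrix (Fin n) (Fin m) ℝ) : Prop :=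
  ∀ l : ℂ, 0 ≤ l.re →
    (Matrix.fromCols (A.map (Complex.ofReal) - l • (1 : Matrix (Fin n) (Fin n) ℂ))
      (B.map (Complex.ofReal))).rank = n

/-- Strong structural controllability of the structured system `(𝒜, ℬ)`. -/
def StrStrControllable {n m : ℕ} (𝒜 : Matrix (Fin n) (Fin n) PSym)
    (ℬ : Matrix (Fin n) (Fin m) PSym) : Prop :=
  ∀ A ∈ PatternClass 𝒜, ∀ B ∈ PatternClass ℬ, Controllable A B

/-- Strong structural stabilizability of the structured system `(𝒜, ℬ)`. -/
def StrStrStabilizable {n m : ℕ} (𝒜 : Matrix (Fin n) (Fin n) PSym)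
    (ℬ : Matrix (Fin n) (Fin m) PSym) : Prop :=
  ∀ A ∈ PatternClass 𝒜, ∀ B ∈ PatternClass ℬ, Stabilizable A B

/-- The pattern matrix `Ā` obtained from `𝒜` by replacing each diagonal entry by `∗`
if it is `0` and by `?` otherwise, keeping all off-diagonal entries. -/
def barPattern {n : ℕ} (𝒜 : Matrix (Fin n) (Fin n) PSym) : Matrix (Fin n) (Fin n) PSym :=
  fun i j => if i = j then (if 𝒜 i i = PSym.zero then PSym.star else PSym.arb) else 𝒜 i j

/-- The sets of black nodes obtainable in `G(M)` by repeatedly applying the color change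
rule, starting from the all-white coloring. The colorable nodes are the rows of `M`;
every node of `G(M)` corresponds to a column `c`, whose out-neighbors are the rows `k`
with `M k c ≠ 0`, and the edge from `c` to `k` is in `E_∗` iff `M k c = ∗`. A step colors
`j` black when some node `c` has `j` as its only white out-neighbor and `(c, j) ∈ E_∗`. -/
inductive ColorStep {R C : Type*} (M : Matrix R C PSym) : Set R → Prop
  | init : ColorStep M ∅
  | step (S : Set R) (c : C) (j : R)
      (hS : ColorStep M S)
      (hstar : M j c = PSym.star)
      (hwhite : j ∉ S)
      (huniq : ∀ k : R, M k c ≠ PSym.zero → k ∉ S → k = j) :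
      ColorStep M (insert j S)

/-- `G(M)` is colorable if all row-nodes can be colored black by repeated application
of the color change rule. -/
def PatternColorable {R C : Type*} (M : Matrix R C PSym) : Prop :=
  ColorStep M Set.univ

/-- helper 1 -/
lemma rank_eq_card_iff_vecMul {K : Type*} [Field K] {R C : Type*} [Fintype R] [Fintype C]
    (M : Matrix R C K) :
    M.rank = Fintype.card R ↔ ∀ z : R → K, z ᵥ* M = 0 → z = 0 := by
  rw [← Matrix.rank_transpose]
  have hrn := (Mᵀ.mulVecLin).finrank_range_add_finrank_ker
  have hcard : Module.finrank K (R → K) = Fintype.card R := Module.finrank_pi K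
  rw [hcard] at hrn
  have hker : (∀ z : R → K, z ᵥ* M = 0 → z = 0) ↔ LinearMap.ker Mᵀ.mulVecLin = ⊥ := by
    rw [LinearMap.ker_eq_bot']
    constructor
    · intro h z hz
      exact h z (by rwa [← Matrix.mulVec_transpose, ← Matrix.mulVecLin_apply])
    · intro h z hz
      exact h z (by rwa [Matrix.mulVecLin_apply, Matrix.mulVec_transpose])
  constructor
  · intro h
    rw [hker, ← Submodule.finrank_eq_zero]
    unfold Matrix.rank at h
    omega
  · intro h
    rw [hker] at h
    unfold Matrix.rank
    rw [h, finrank_bot] at hrn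
    omega

/-- helper 2: colorable implies trivial left kernel over any field -/
lemma colorStep_vecMul_zero {K : Type*} [Field K] {R C : Type*} [Fintype R] [Fintype C]
    (M : Matrix R C PSym) (M' : Matrix R C K)
    (h0 : ∀ i j, M i j = PSym.zero → M' i j = 0)
    (hs : ∀ i j, M i j = PSym.star → M' i j ≠ 0)
    {S : Set R} (hS : ColorStep M S) :
    ∀ z : R → K, z ᵥ* M' = 0 → ∀ k ∈ S, z k = 0 := by
  induction hS with
  | init => simp
  | step S c j hS hstar hwhite huniq ih =>
    intro z hz k hk
    rcases Set.mem_insert_iff.mp hk with rfl | hkS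
    · have hcol := congrFun hz c
      simp only [Matrix.vecMul, dotProduct, Pi.zero_apply] at hcol
      have hrest : ∀ i ∈ Finset.univ, i ≠ k → z i * M' i c = 0 := by
        intro i _ hij
        by_cases hiS : i ∈ S
        · rw [ih z hz i hiS, zero_mul]
        · have hzero : M i c = PSym.zero := by
            by_contra hne
            exact hij (huniq i hne hiS)
          rw [h0 i c hzero, mul_zero]
      rw [Finset.sum_eq_single k hrest (by simp)] at hcol
      exact (mul_eq_zero.mp hcol).resolve_right (hs k c hstar)
    · exact ih z hz k hkS

/-- helper 3a: a stuck, non-full coloring yields a kernel vector -/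
lemma stuck_contradiction {R C : Type*} [Fintype R] [LinearOrder R] [Fintype C]
    (M : Matrix R C PSym)
    (hker : ∀ M' : Matrix R C ℝ,
      (∀ i j, M i j = PSym.zero → M' i j = 0) →
      (∀ i j, M i j = PSym.star → M' i j ≠ 0) →
      ∀ z : R → ℝ, z ᵥ* M' = 0 → z = 0)
    (S : Set R) (hne : S ≠ Set.univ)
    (hstuck : ∀ (c : C) (j : R), M j c = PSym.star → j ∉ S →
      (∀ k : R, M k c ≠ PSym.zero → k ∉ S → k = j) → False) : False := by
  classical
  set Fc : C → Finset R := fun c =>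
    (Set.toFinite {k | k ∉ S ∧ M k c ≠ PSym.zero}).toFinset with hFc
  have hmemFc : ∀ c k, k ∈ Fc c ↔ (k ∉ S ∧ M k c ≠ PSym.zero) := by
    intro c k
    simp [hFc, Set.Finite.mem_toFinset]
  -- card at least two at stuck star columns
  have hcard2 : ∀ (c : C) (j : R), j ∉ S → M j c = PSym.star → 2 ≤ (Fc c).card := by
    intro c j hjS hjstar
    have : ¬ (∀ k : R, M k c ≠ PSym.zero → k ∉ S → k = j) := fun h =>
      hstuck c j hjstar hjS h
    push_neg at this
    obtain ⟨k, hk1, hk2, hk3⟩ := this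
    refine Finset.one_lt_card.mpr ⟨j, ?_, k, ?_, fun h => hk3 h.symm⟩
    · exact (hmemFc c j).mpr ⟨hjS, by simp [hjstar]⟩
    · exact (hmemFc c k).mpr ⟨hk2, hk1⟩
  -- the matrix
  set M' : Matrix R C ℝ := fun k c =>
    if h : k ∉ S ∧ M k c ≠ PSym.zero then
      (if k = (Fc c).min' ⟨k, (hmemFc c k).mpr h⟩ then 1 - ((Fc c).card : ℝ) else 1)
    else if M k c = PSym.star then 1 else 0 with hM'
  have h0 : ∀ i j, M i j = PSym.zero → M' i j = 0 := by
    intro i j hij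
    simp [hM', hij]
  have hs : ∀ i j, M i j = PSym.star → M' i j ≠ 0 := by
    intro i j hij
    by_cases hiS : i ∈ S
    · simp [hM', hiS, hij]
    · have hcond : i ∉ S ∧ M i j ≠ PSym.zero := ⟨hiS, by simp [hij]⟩
      have h2 : 2 ≤ ((Fc j).card : ℝ) := by exact_mod_cast hcard2 j i hiS hij
      simp only [hM', dif_pos hcond]
      split
      · intro h; nlinarith
      · norm_num
  -- the kernel vector
  set z : R → ℝ := fun k => if k ∈ S then 0 else 1 with hz
  have hzker : z ᵥ* M' = 0 := by
    funext c
    simp only [Matrix.vecMul, dotProduct, Pi.zero_apply]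
    by_cases hFne : (Fc c).Nonempty
    · set mc := (Fc c).min' hFne with hmc
      have hterm : ∀ k, z k * M' k c =
          if k ∈ Fc c then (1 + (if k = mc then -((Fc c).card : ℝ) else 0)) else 0 := by
        intro k
        by_cases hk : k ∈ Fc c
        · obtain ⟨hkS, hkz⟩ := (hmemFc c k).mp hk
          have hpi : (Fc c).min' ⟨k, (hmemFc c k).mpr ⟨hkS, hkz⟩⟩ = mc := rfl
          simp only [hz, hM', if_neg hkS, one_mul, dif_pos (And.intro hkS hkz), hpi, if_pos hk]
          split <;> ring
        · rw [if_neg hk]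
          by_cases hkS : k ∈ S
          · simp [hz, hkS]
          · have hkz : M k c = PSym.zero := by
              by_contra hne2
              exact hk ((hmemFc c k).mpr ⟨hkS, hne2⟩)
            simp [hz, hM', hkS, hkz]
      rw [Finset.sum_congr rfl (fun k _ => hterm k)]
      rw [Finset.sum_ite_mem, Finset.univ_inter, Finset.sum_add_distrib]
      rw [Finset.sum_const, Finset.sum_ite_eq' (Fc c) mc (fun _ => -((Fc c).card : ℝ))]
      simp [Finset.min'_mem _ hFne, hmc]
    · rw [Finset.not_nonempty_iff_eq_empty] at hFne
      have hterm : ∀ k, z k * M' k c = 0 := by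
        intro k
        by_cases hkS : k ∈ S
        · simp [hz, hkS]
        · have hkz : M k c = PSym.zero := by
            by_contra hne2
            have := (hmemFc c k).mpr ⟨hkS, hne2⟩
            simp [hFne] at this
          simp [hz, hM', hkS, hkz]
      simp [hterm]
  have hz0 := hker M' h0 hs z hzker
  obtain ⟨w, -, hwS⟩ := Set.not_subset.mp (fun h => hne (Set.eq_univ_of_univ_subset h))
  have : z w = 1 := by simp [hz, hwS]
  rw [hz0] at this
  simp at this

/-- helper 3b: trivial left kernel for all pattern members implies colorability -/
lemma kernel_trivial_colorable {R C : Type*} [Fintype R] [LinearOrder R] [Fintype C]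
    (M : Matrix R C PSym)
    (hker : ∀ M' : Matrix R C ℝ,
      (∀ i j, M i j = PSym.zero → M' i j = 0) →
      (∀ i j, M i j = PSym.star → M' i j ≠ 0) →
      ∀ z : R → ℝ, z ᵥ* M' = 0 → z = 0) :
    PatternColorable M := by
  classical
  have key : ∀ (t : ℕ) (S : Set R), ColorStep M S → t + S.ncard = Fintype.card R →
      ColorStep M Set.univ := by
    intro t
    induction t with
    | zero =>
      intro S hS hcard
      have hfin : (Set.univ : Set R).Finite := Set.finite_univ
      have huniv : ((Set.univ : Set R)).ncard = Fintype.card R := by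
        rw [Set.ncard_univ, Nat.card_eq_fintype_card]
      have : S = Set.univ := Set.eq_of_subset_of_ncard_le (Set.subset_univ S)
        (by omega) hfin
      rwa [this] at hS
    | succ t ih =>
      intro S hS hcard
      by_cases hSu : S = Set.univ
      · rwa [hSu] at hS
      by_cases hstep : ∃ (c : C) (j : R), M j c = PSym.star ∧ j ∉ S ∧
          (∀ k : R, M k c ≠ PSym.zero → k ∉ S → k = j)
      · obtain ⟨c, j, hstar, hwhite, huniq⟩ := hstep
        have hS' : ColorStep M (insert j S) := ColorStep.step S c j hS hstar hwhite huniq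
        have hcard' : (insert j S).ncard = S.ncard + 1 :=
          Set.ncard_insert_of_notMem hwhite (Set.toFinite S)
        exact ih (insert j S) hS' (by omega)
      · exfalso
        push_neg at hstep
        exact stuck_contradiction M hker S hSu (fun c j h1 h2 h3 => by
          rcases hstep c j h1 h2 with ⟨k, hk1, hk2, hk3⟩
          exact hk3 (h3 k hk1 hk2))
  exact key (Fintype.card R) ∅ ColorStep.init (by simp)

/-- **Theorem 1 (algebraic conditions).** `(𝒜, ℬ)` is strongly structurally controllable
iff both `[𝒜 ℬ]` and `[𝒜bar ℬ]` have full row rank. -/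
theorem ssc_iff_full_row_rank {n m : ℕ} (𝒜 : Matrix (Fin n) (Fin n) PSym)
    (ℬ : Matrix (Fin n) (Fin m) PSym) :
    StrStrControllable 𝒜 ℬ ↔
      PatternFullRowRank (Matrix.fromCols 𝒜 ℬ) ∧
      PatternFullRowRank (Matrix.fromCols (barPattern 𝒜) ℬ) := by
  classical
  constructor
  · intro hssc
    constructor
    -- (1) [𝒜 ℬ] full row rank
    · intro M hM
      set A : Matrix (Fin n) (Fin n) ℝ := fun i j => M i (Sum.inl j) with hA
      set B : Matrix (Fin n) (Fin m) ℝ := fun i j => M i (Sum.inr j) with hB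
      have hAmem : A ∈ PatternClass 𝒜 := fun i j => hM i (Sum.inl j)
      have hBmem : B ∈ PatternClass ℬ := fun i j => hM i (Sum.inr j)
      have hctrl := hssc A hAmem B hBmem 0
      rw [rank_eq_card_iff_vecMul]
      intro z hz
      have hzc : (fun i => ((z i : ℝ) : ℂ)) ᵥ*
          (Matrix.fromCols (A.map (Complex.ofReal) - (0:ℂ) • 1) (B.map Complex.ofReal)) = 0 := by
        funext c
        have hzc' := congrFun hz c
        simp only [Matrix.vecMul, dotProduct, Pi.zero_apply] at hzc' ⊢
        rcases c with j | j
        · have hent : ∀ x, (Matrix.fromCols (A.map Complex.ofReal - (0:ℂ) • 1)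
              (B.map Complex.ofReal)) x (Sum.inl j) = ((M x (Sum.inl j) : ℝ) : ℂ) := by
            intro x
            simp [Matrix.fromCols, (show ∀ x y, A x y = M x (Sum.inl y) from fun _ _ => rfl)]
          rw [Finset.sum_congr rfl (fun x _ => by rw [hent x])]
          exact_mod_cast hzc'
        · have hent : ∀ x, (Matrix.fromCols (A.map Complex.ofReal - (0:ℂ) • 1)
              (B.map Complex.ofReal)) x (Sum.inr j) = ((M x (Sum.inr j) : ℝ) : ℂ) := by
            intro x
            simp [Matrix.fromCols, (show ∀ x y, B x y = M x (Sum.inr y) from fun _ _ => rfl)]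
          rw [Finset.sum_congr rfl (fun x _ => by rw [hent x])]
          exact_mod_cast hzc'
      have := (rank_eq_card_iff_vecMul _).mp (by simpa [Fintype.card_fin] using hctrl) _ hzc
      funext i
      have hzi := congrFun this i
      simp only [Pi.zero_apply] at hzi
      show z i = 0
      exact_mod_cast hzi
    -- (2) [𝒜bar ℬ] full row rank
    · intro M hM
      set lr : ℝ := 1 + ∑ i, |M i (Sum.inl i)| with hlr
      have hlrpos : 0 < lr := by
        have : (0:ℝ) ≤ ∑ i, |M i (Sum.inl i)| :=
          Finset.sum_nonneg fun i _ => abs_nonneg _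
        simp only [hlr]; linarith
      have hdiagle : ∀ i : Fin n, 0 < M i (Sum.inl i) + lr := by
        intro i
        have h1 : |M i (Sum.inl i)| ≤ ∑ k, |M k (Sum.inl k)| :=
          Finset.single_le_sum (f := fun k => |M k (Sum.inl k)|)
            (fun k _ => abs_nonneg _) (Finset.mem_univ i)
        have h2 : -(M i (Sum.inl i)) ≤ |M i (Sum.inl i)| := neg_le_abs _
        simp only [hlr]; linarith
      have hdiagnz : ∀ i : Fin n, 𝒜 i i = PSym.zero → M i (Sum.inl i) ≠ 0 := by
        intro i hi
        have : Matrix.fromCols (barPattern 𝒜) ℬ i (Sum.inl i) = PSym.star := by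
          simp [Matrix.fromCols, barPattern, hi]
        exact (hM i (Sum.inl i)).2 this
      set d : Fin n → ℝ := fun i => if 𝒜 i i = PSym.zero then -lr / M i (Sum.inl i) else 1
        with hd
      have hdnz : ∀ i, d i ≠ 0 := by
        intro i
        simp only [hd]
        split
        · exact div_ne_zero (by linarith) (hdiagnz i (by assumption))
        · norm_num
      set A : Matrix (Fin n) (Fin n) ℝ :=
        fun i j => M i (Sum.inl j) * d j + if i = j then lr else 0 with hA
      set B : Matrix (Fin n) (Fin m) ℝ := fun i j => M i (Sum.inr j) with hB
      have hAmem : A ∈ PatternClass 𝒜 := by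
        intro i j
        constructor
        · intro hij
          by_cases hij' : i = j
          · subst hij'
            have hnz := hdiagnz i hij
            have hdv : d i = -lr / M i (Sum.inl i) := by simp [hd, hij]
            show M i (Sum.inl i) * d i + (if i = i then lr else 0) = 0
            rw [hdv, if_pos rfl, mul_comm, div_mul_cancel₀ _ hnz]
            ring
          · have : Matrix.fromCols (barPattern 𝒜) ℬ i (Sum.inl j) = PSym.zero := by
              simp [Matrix.fromCols, barPattern, hij', hij]
            have hMz := (hM i (Sum.inl j)).1 this
            simp [hA, hMz, hij']
        · intro hij
          by_cases hij' : i = j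
          · subst hij'
            have hne0 : 𝒜 i i ≠ PSym.zero := by rw [hij]; simp
            have hd1 : d i = 1 := by simp [hd, hne0]
            have hAv : A i i = M i (Sum.inl i) + lr := by
              simp [hA, hd1]
            rw [hAv]
            have := hdiagle i
            intro h; linarith [this]
          · have : Matrix.fromCols (barPattern 𝒜) ℬ i (Sum.inl j) = PSym.star := by
              simp [Matrix.fromCols, barPattern, hij', hij]
            have hMnz := (hM i (Sum.inl j)).2 this
            simp only [hA, if_neg hij', add_zero]
            exact mul_ne_zero hMnz (hdnz j)
      have hBmem : B ∈ PatternClass ℬ := fun i j => hM i (Sum.inr j)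
      have hctrl := hssc A hAmem B hBmem (lr : ℂ)
      rw [rank_eq_card_iff_vecMul]
      intro z hz
      -- the Hautus matrix columns are scalings of columns of M
      have hzc : (fun i => ((z i : ℝ) : ℂ)) ᵥ*
          (Matrix.fromCols (A.map (Complex.ofReal) - (lr:ℂ) • 1) (B.map Complex.ofReal))
          = 0 := by
        funext c
        have hzc' := congrFun hz c
        simp only [Matrix.vecMul, dotProduct, Pi.zero_apply] at hzc' ⊢
        rcases c with j | j
        · have hent : ∀ i, (Matrix.fromCols (A.map (Complex.ofReal) - (lr:ℂ) • 1)
              (B.map Complex.ofReal)) i (Sum.inl j) = ((M i (Sum.inl j) * d j : ℝ) : ℂ) := by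
            intro i
            simp only [Matrix.fromCols, Matrix.of_apply, Matrix.sub_apply, Matrix.map_apply,
              Matrix.smul_apply, Matrix.one_apply, (show ∀ x y, A x y = M x (Sum.inl y) * d y + (if x = y then lr else 0) from fun _ _ => rfl)]
            by_cases hij : i = j <;> simp [hij, (show ∀ x y, A x y = M x (Sum.inl y) * d y + (if x = y then lr else 0) from fun _ _ => rfl)] <;> push_cast <;> ring
          calc ∑ i, ((z i : ℝ):ℂ) * (Matrix.fromCols (A.map (Complex.ofReal) - (lr:ℂ) • 1)
                (B.map Complex.ofReal)) i (Sum.inl j)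
              = ((∑ i, z i * M i (Sum.inl j)) * d j : ℝ) := by
                rw [Finset.sum_congr rfl (fun i _ => by rw [hent i])]
                push_cast
                rw [Finset.sum_mul]
                exact Finset.sum_congr rfl (fun i _ => by ring)
            _ = 0 := by rw [hzc']; simp
        · have hent : ∀ i, (Matrix.fromCols (A.map (Complex.ofReal) - (lr:ℂ) • 1)
              (B.map Complex.ofReal)) i (Sum.inr j) = ((M i (Sum.inr j) : ℝ) : ℂ) := by
            intro i
            simp [Matrix.fromCols, (show ∀ x y, B x y = M x (Sum.inr y) from fun _ _ => rfl)]
          rw [Finset.sum_congr rfl (fun i _ => by rw [hent i])]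
          exact_mod_cast hzc'
      have := (rank_eq_card_iff_vecMul _).mp (by simpa [Fintype.card_fin] using hctrl) _ hzc
      funext i
      have hzi := congrFun this i
      simp only [Pi.zero_apply] at hzi
      show z i = 0
      exact_mod_cast hzi
  · rintro ⟨h1, h2⟩
    intro A hA B hB l
    have hcol1 : PatternColorable (Matrix.fromCols 𝒜 ℬ) := by
      apply kernel_trivial_colorable
      intro M' hz0 hzs z hz
      exact (rank_eq_card_iff_vecMul M').mp (h1 M' (fun i j => ⟨hz0 i j, hzs i j⟩)) z hz
    have hcol2 : PatternColorable (Matrix.fromCols (barPattern 𝒜) ℬ) := by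
      apply kernel_trivial_colorable
      intro M' hz0 hzs z hz
      exact (rank_eq_card_iff_vecMul M').mp (h2 M' (fun i j => ⟨hz0 i j, hzs i j⟩)) z hz
    set H := Matrix.fromCols (A.map (Complex.ofReal) - l • (1 : Matrix (Fin n) (Fin n) ℂ))
      (B.map Complex.ofReal) with hH
    have hiff := rank_eq_card_iff_vecMul H
    rw [Fintype.card_fin] at hiff
    rw [hiff]
    intro z hz
    by_cases hl : l = 0
    · -- H is in the complex pattern class of [𝒜 ℬ]
      have hz0 : ∀ i c, Matrix.fromCols 𝒜 ℬ i c = PSym.zero → H i c = 0 := by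
        intro i c hc
        rcases c with j | j
        · have := (hA i j).1 hc
          simp [hH, hl, Matrix.fromCols, this]
        · have := (hB i j).1 hc
          simp [hH, hl, Matrix.fromCols, this]
      have hzs : ∀ i c, Matrix.fromCols 𝒜 ℬ i c = PSym.star → H i c ≠ 0 := by
        intro i c hc
        rcases c with j | j
        · have := (hA i j).2 hc
          simp [hH, hl, Matrix.fromCols, this]
        · have := (hB i j).2 hc
          simp [hH, hl, Matrix.fromCols, this]
      have := colorStep_vecMul_zero _ H hz0 hzs hcol1 z hz
      funext k
      exact this k (Set.mem_univ k)
    · -- H is in the complex pattern class of [𝒜bar ℬ]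
      have hz0 : ∀ i c, Matrix.fromCols (barPattern 𝒜) ℬ i c = PSym.zero → H i c = 0 := by
        intro i c hc
        rcases c with j | j
        · have hij : i ≠ j := by
            rintro rfl
            have hc' : (if 𝒜 i i = PSym.zero then PSym.star else PSym.arb) = PSym.zero := by
              simpa [Matrix.fromCols, barPattern] using hc
            split at hc' <;> cases hc'
          have hAij : 𝒜 i j = PSym.zero := by
            simpa [Matrix.fromCols, barPattern, hij] using hc
          have := (hA i j).1 hAij
          simp [hH, Matrix.fromCols, this, Matrix.one_apply, hij]
        · have := (hB i j).1 (by simpa [Matrix.fromCols] using hc)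
          simp [hH, Matrix.fromCols, this]
      have hzs : ∀ i c, Matrix.fromCols (barPattern 𝒜) ℬ i c = PSym.star → H i c ≠ 0 := by
        intro i c hc
        rcases c with j | j
        · by_cases hij : i = j
          · subst hij
            have hAii : 𝒜 i i = PSym.zero := by
              have hc' : (if 𝒜 i i = PSym.zero then PSym.star else PSym.arb) = PSym.star := by
                simpa [Matrix.fromCols, barPattern] using hc
              by_contra hne
              rw [if_neg hne] at hc'
              cases hc'
            have hA0 := (hA i i).1 hAii
            simp [hH, Matrix.fromCols, hA0, Matrix.one_apply, hl]
          · have hAij : 𝒜 i j = PSym.star := by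
              simpa [Matrix.fromCols, barPattern, hij] using hc
            have := (hA i j).2 hAij
            simp [hH, Matrix.fromCols, Matrix.one_apply, hij, this]
        · have := (hB i j).2 (by simpa [Matrix.fromCols] using hc)
          simp [hH, Matrix.fromCols, this]
      have := colorStep_vecMul_zero _ H hz0 hzs hcol2 z hz
      funext k
      exact this k (Set.mem_univ k)
end

section
/- Let A be an n×n pattern matrix none of whose diagonal entries is 0, and let B be an n×m pattern matrix. Let Ā be the pattern matrix obtained from A by keeping all off-diagonal entries and replacing each diagonal entry A_ii by ∗ if A_ii = 0 and by ? otherwise. Then the structured system (A,B) is strongly structurally controllable if and only if the n×(n+m) pattern matrix [Ā B] has full row rank. -/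
open Matrix

/-! ### Auxiliary lemmas -/

lemma rank_eq_card_iff_vecMul_s1 {F : Type*} [Field F] {n : ℕ} {C : Type*} [Fintype C] (A : Matrix (Fin n) C F) :
    A.rank = n ↔ ∀ v : Fin n → F, v ᵥ* A = 0 → v = 0 := by
  have h1 : A.rank = Aᵀ.rank := (Matrix.rank_transpose A).symm
  have h3 := LinearMap.finrank_range_add_finrank_ker (Aᵀ.mulVecLin)
  have hfin : Module.finrank F (Fin n → F) = n := by simp
  rw [hfin] at h3
  have h2 : Aᵀ.rank = Module.finrank F (LinearMap.range Aᵀ.mulVecLin) := rfl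
  constructor
  · intro hr v hv
    have hker : Module.finrank F (LinearMap.ker Aᵀ.mulVecLin) = 0 := by omega
    have hbot : LinearMap.ker Aᵀ.mulVecLin = ⊥ := Submodule.finrank_eq_zero.mp hker
    have hv' : Aᵀ.mulVecLin v = 0 := by
      simpa [Matrix.mulVecLin_apply, Matrix.mulVec_transpose] using hv
    exact (LinearMap.ker_eq_bot.mp hbot).eq_iff.mp (by simpa using hv')
  · intro h
    have hbot : LinearMap.ker Aᵀ.mulVecLin = ⊥ := by
      rw [LinearMap.ker_eq_bot']
      intro v hv
      exact h v (by simpa [Matrix.mulVecLin_apply, Matrix.mulVec_transpose] using hv)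
    rw [hbot] at h3
    simp at h3
    omega

/-- The coloring argument: if `S` is colorable then any left-annihilator of any matrix in the
`F`-valued pattern class vanishes on `S`. -/
lemma colorStep_vecMul_eq_zero {F : Type*} [Field F] {n : ℕ} {C : Type*} [Fintype C]
    {M : Matrix (Fin n) C PSym} {S : Set (Fin n)} (h : ColorStep M S)
    {A : Matrix (Fin n) C F}
    (hA : ∀ i j, (M i j = PSym.zero → A i j = 0) ∧ (M i j = PSym.star → A i j ≠ 0))
    {v : Fin n → F} (hv : v ᵥ* A = 0) : ∀ j ∈ S, v j = 0 := by
  induction h with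
  | init => intro j hj; exact absurd hj (Set.notMem_empty j)
  | step S c j hS hstar hwhite huniq ih =>
    have hj : v j = 0 := by
      have hc : ∑ k, v k * A k c = 0 := by
        have := congrFun hv c
        simpa [Matrix.vecMul, dotProduct] using this
      have hsingle : ∑ k, v k * A k c = v j * A j c := by
        refine Finset.sum_eq_single j (fun k _ hk => ?_) (by simp)
        by_cases hkS : k ∈ S
        · rw [ih k hkS, zero_mul]
        · by_cases hk0 : M k c = PSym.zero
          · rw [(hA k c).1 hk0, mul_zero]
          · exact absurd (huniq k hk0 hkS) hk
      rw [hsingle] at hc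
      exact (mul_eq_zero.mp hc).resolve_right ((hA j c).2 hstar)
    intro k hk
    rcases Set.mem_insert_iff.mp hk with rfl | hk
    · exact hj
    · exact ih k hk

/-- If the coloring process is stuck at `S ≠ univ`, there is a rank-deficient real matrix
in the pattern class. -/
lemma not_fullRowRank_of_stuck {n : ℕ} {C : Type*} [Fintype C] (M : Matrix (Fin n) C PSym)
    (S : Set (Fin n)) (hne : S ≠ Set.univ)
    (hstuck : ¬ ∃ (c : C) (j : Fin n), M j c = PSym.star ∧ j ∉ S ∧
        ∀ k, M k c ≠ PSym.zero → k ∉ S → k = j) :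
    ¬ PatternFullRowRank M := by
  classical
  push_neg at hstuck
  set W : Finset (Fin n) := Finset.univ.filter (fun k => k ∉ S) with hW
  have hmemW : ∀ k, k ∈ W ↔ k ∉ S := by
    intro k; simp [hW]
  -- columnwise construction
  have hcol : ∀ c : C, ∃ a : Fin n → ℝ,
      (∀ k, (M k c = PSym.zero → a k = 0) ∧ (M k c = PSym.star → a k ≠ 0)) ∧
      ∑ k ∈ W, a k = 0 := by
    intro c
    by_cases hstar : ∃ j₁, j₁ ∉ S ∧ M j₁ c = PSym.star
    · obtain ⟨j₁, hj₁S, hj₁⟩ := hstar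
      obtain ⟨j₂, hj₂0, hj₂S, hj₂ne⟩ := hstuck c j₁ hj₁ hj₁S
      set b : Fin n → ℝ := fun k => if M k c = PSym.star then 1 else 0 with hb
      set s : ℝ := ∑ k ∈ W, b k with hs
      refine ⟨fun k => if k = j₂ then b j₂ - s else b k, ?_, ?_⟩
      · intro k
        constructor
        · intro hk0
          by_cases hkj : k = j₂
          · exact absurd (hkj ▸ hk0) hj₂0
          · simp [hkj, hb, hk0]
        · intro hk1
          by_cases hkj : k = j₂
          · -- need b j₂ - s ≠ 0, with b j₂ = 1 and s ≥ 2
            have hbj2 : b j₂ = 1 := by simp [hb, hkj ▸ hk1]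
            have hbj1 : b j₁ = 1 := by simp [hb, hj₁]
            have hnonneg : ∀ k ∈ W, 0 ≤ b k := by
              intro k _; simp only [hb]; split <;> norm_num
            have hsub : ({j₁, j₂} : Finset (Fin n)) ⊆ W := by
              intro x hx
              rcases Finset.mem_insert.mp hx with rfl | hx
              · exact (hmemW _).mpr hj₁S
              · rw [Finset.mem_singleton.mp hx]; exact (hmemW _).mpr hj₂S
            have hpair : ∑ x ∈ ({j₁, j₂} : Finset (Fin n)), b x = 2 := by
              rw [Finset.sum_pair hj₂ne.symm, hbj1, hbj2]; norm_num
            have h2s : (2 : ℝ) ≤ s := by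
              rw [← hpair, hs]
              exact Finset.sum_le_sum_of_subset_of_nonneg hsub
                (fun x hx _ => hnonneg x hx)
            show (if k = j₂ then b j₂ - s else b k) ≠ 0
            rw [if_pos hkj, hbj2]
            intro h
            linarith
          · simp [hkj, hb, hk1]
      · have hj₂W : j₂ ∈ W := (hmemW _).mpr hj₂S
        rw [← Finset.sum_erase_add _ _ hj₂W]
        have herase : ∑ k ∈ W.erase j₂, (if k = j₂ then b j₂ - s else b k)
            = ∑ k ∈ W.erase j₂, b k := by
          refine Finset.sum_congr rfl (fun k hk => ?_)
          rw [if_neg (Finset.ne_of_mem_erase hk)]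
        rw [herase, if_pos rfl]
        have := Finset.sum_erase_add W b hj₂W
        rw [← hs] at this
        linarith [this]
    · push_neg at hstar
      refine ⟨fun k => if M k c = PSym.star then 1 else 0, ?_, ?_⟩
      · intro k
        exact ⟨fun hk0 => by simp [hk0], fun hk1 => by simp [hk1]⟩
      · refine Finset.sum_eq_zero (fun k hk => ?_)
        rw [if_neg (hstar k ((hmemW k).mp hk))]
    -- end columns
  choose a ha using hcol
  set A : Matrix (Fin n) C ℝ := Matrix.of (fun k c => a c k) with hA
  intro hfrr
  have hAcl : A ∈ PatternClass M := by
    intro i j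
    exact (ha j).1 i
  have hrank := hfrr A hAcl
  rw [Fintype.card_fin, rank_eq_card_iff_vecMul_s1] at hrank
  set v : Fin n → ℝ := fun k => if k ∈ S then 0 else 1 with hv
  have hvA : v ᵥ* A = 0 := by
    funext c
    have : ∑ k, v k * A k c = ∑ k ∈ W, A k c := by
      rw [Finset.sum_filter]
      refine Finset.sum_congr rfl (fun k _ => ?_)
      by_cases hkS : k ∈ S <;> simp [hv, hkS]
    have h0 : (v ᵥ* A) c = ∑ k, v k * A k c := by
      simp [Matrix.vecMul, dotProduct]
    rw [Pi.zero_apply, h0, this]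
    exact (ha c).2
  have hv0 := hrank v hvA
  obtain ⟨k, hk⟩ : ∃ k, k ∉ S := by
    by_contra h
    push_neg at h
    exact hne (Set.eq_univ_of_forall h)
  have := congrFun hv0 k
  simp [hv, hk] at this

/-- Full row rank of the pattern implies colorability. -/
lemma patternColorable_of_fullRowRank {n : ℕ} {C : Type*} [Fintype C] (M : Matrix (Fin n) C PSym)
    (hfrr : PatternFullRowRank M) : PatternColorable M := by
  classical
  suffices h : ∀ k (S : Set (Fin n)), ColorStep M S → Sᶜ.ncard ≤ k → ColorStep M Set.univ by
    refine h n ∅ ColorStep.init ?_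
    rw [Set.compl_empty]
    simpa using (Set.ncard_univ (Fin n)).le
  intro k
  induction k with
  | zero =>
    intro S hS h0
    have : Sᶜ = ∅ := (Set.ncard_eq_zero (Set.toFinite _)).mp (Nat.le_zero.mp h0)
    have : S = Set.univ := by
      rw [← compl_compl S, this, Set.compl_empty]
    exact this ▸ hS
  | succ k ih =>
    intro S hS hcard
    by_cases huniv : S = Set.univ
    · exact huniv ▸ hS
    · by_cases hstep : ∃ (c : C) (j : Fin n), M j c = PSym.star ∧ j ∉ S ∧
          ∀ k', M k' c ≠ PSym.zero → k' ∉ S → k' = j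
      · obtain ⟨c, j, h1, h2, h3⟩ := hstep
        refine ih (insert j S) (ColorStep.step S c j hS h1 h2 h3) ?_
        have hcompl : (insert j S)ᶜ = Sᶜ \ {j} := by
          ext x
          simp [Set.mem_insert_iff, Set.mem_diff, and_comm, not_or]
        have hjmem : j ∈ Sᶜ := h2
        rw [hcompl, Set.ncard_diff_singleton_of_mem hjmem]
        have hpos : 1 ≤ Sᶜ.ncard := (Set.ncard_pos (Set.toFinite _)).mpr ⟨j, hjmem⟩
        omega
      · exact absurd hfrr (not_fullRowRank_of_stuck M S huniv hstep)

/-- **Corollary (algebraic condition, nonzero diagonal).** If no diagonal entry of `𝒜`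
is `0`, then `(𝒜, ℬ)` is strongly structurally controllable iff `[𝒜bar ℬ]` has full
row rank. -/
theorem ssc_iff_full_row_rank_of_diag_ne_zero {n m : ℕ} (𝒜 : Matrix (Fin n) (Fin n) PSym)
    (ℬ : Matrix (Fin n) (Fin m) PSym) (hdiag : ∀ i, 𝒜 i i ≠ PSym.zero) :
    StrStrControllable 𝒜 ℬ ↔
      PatternFullRowRank (Matrix.fromCols (barPattern 𝒜) ℬ) := by
  classical
  have hbar_diag : ∀ i, barPattern 𝒜 i i = PSym.arb := by
    intro i; simp [barPattern, hdiag i]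
  have hbar_off : ∀ i j, i ≠ j → barPattern 𝒜 i j = 𝒜 i j := by
    intro i j hij; simp [barPattern, hij]
  constructor
  · -- SSC → full row rank
    intro hssc Mx hMx
    rw [Fintype.card_fin, rank_eq_card_iff_vecMul_s1]
    set A1 : Matrix (Fin n) (Fin n) ℝ := Mx.toCols₁ with hA1
    set B1 : Matrix (Fin n) (Fin m) ℝ := Mx.toCols₂ with hB1
    obtain ⟨l, hl⟩ : ∃ l : ℝ, ∀ i, A1 i i + l ≠ 0 := by
      obtain ⟨l, hl⟩ := Infinite.exists_notMem_finset
        (Finset.univ.image (fun i : Fin n => -A1 i i))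
      refine ⟨l, fun i h => hl ?_⟩
      exact Finset.mem_image.mpr ⟨i, Finset.mem_univ i, by linarith⟩
    set A : Matrix (Fin n) (Fin n) ℝ := A1 + l • (1 : Matrix (Fin n) (Fin n) ℝ) with hAdef
    have hAmem : A ∈ PatternClass 𝒜 := by
      intro i j
      constructor
      · intro h0
        have hij : i ≠ j := fun h => hdiag i (h ▸ h0)
        have := (hMx i (Sum.inl j)).1
        rw [Matrix.fromCols_apply_inl, hbar_off i j hij] at this
        have hMx0 := this h0
        simp [hAdef, Matrix.one_apply, hij, hA1, Matrix.toCols₁] at *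
        simp [hMx0]
      · intro h1
        rcases eq_or_ne i j with rfl | hij
        · simpa [hAdef, Matrix.one_apply] using hl i
        · have := (hMx i (Sum.inl j)).2
          rw [Matrix.fromCols_apply_inl, hbar_off i j hij] at this
          have hMx1 := this h1
          simpa [hAdef, Matrix.one_apply, hij, hA1, Matrix.toCols₁] using hMx1
    have hBmem : B1 ∈ PatternClass ℬ := by
      intro i j
      have := hMx i (Sum.inr j)
      rw [Matrix.fromCols_apply_inr] at this
      exact this
    have hcon := hssc A hAmem B1 hBmem (l : ℂ)
    have hid : Matrix.fromCols
        (A.map Complex.ofReal - (l : ℂ) • (1 : Matrix (Fin n) (Fin n) ℂ))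
        (B1.map Complex.ofReal) = Mx.map Complex.ofReal := by
      ext i j
      cases j with
      | inl j =>
        rcases eq_or_ne i j with rfl | hij
        · simp [hAdef, Matrix.one_apply, Matrix.map_apply, hA1, Matrix.toCols₁]
        · simp [hAdef, Matrix.one_apply, hij, Matrix.map_apply, hA1, Matrix.toCols₁]
      | inr j =>
        simp [Matrix.map_apply, hB1, Matrix.toCols₂]
    rw [hid] at hcon
    intro v hv
    have hv' : (fun i => (v i : ℂ)) ᵥ* (Mx.map Complex.ofReal) = 0 := by
      funext c
      have h0 : ∑ i, v i * Mx i c = 0 := by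
        have := congrFun hv c
        simpa [Matrix.vecMul, dotProduct] using this
      have : ((∑ i, v i * Mx i c : ℝ) : ℂ) = 0 := by rw [h0]; norm_num
      simpa [Matrix.vecMul, dotProduct, Matrix.map_apply] using this
    have hz := (rank_eq_card_iff_vecMul_s1 _).mp hcon _ hv'
    funext i
    have := congrFun hz i
    simp only [Pi.zero_apply, Complex.ofReal_eq_zero] at this
    simpa using this
  · -- full row rank → SSC
    intro hfrr A hA B hB l
    have hcolor := patternColorable_of_fullRowRank _ hfrr
    set N : Matrix (Fin n) (Fin n ⊕ Fin m) ℂ := Matrix.fromCols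
      (A.map Complex.ofReal - l • (1 : Matrix (Fin n) (Fin n) ℂ))
      (B.map Complex.ofReal) with hN
    have hNmem : ∀ i j, ((Matrix.fromCols (barPattern 𝒜) ℬ) i j = PSym.zero → N i j = 0) ∧
        ((Matrix.fromCols (barPattern 𝒜) ℬ) i j = PSym.star → N i j ≠ 0) := by
      intro i j
      cases j with
      | inl j =>
        rw [Matrix.fromCols_apply_inl]
        rcases eq_or_ne i j with rfl | hij
        · rw [hbar_diag i]
          exact ⟨fun h => absurd h (by decide), fun h => absurd h (by decide)⟩
        · rw [hbar_off i j hij]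
          constructor
          · intro h0
            have := (hA i j).1 h0
            simp [hN, Matrix.fromCols_apply_inl, Matrix.one_apply, hij,
              Matrix.map_apply, this]
          · intro h1
            have := (hA i j).2 h1
            simp [hN, Matrix.fromCols_apply_inl, Matrix.one_apply, hij,
              Matrix.map_apply, this]
      | inr j =>
        rw [Matrix.fromCols_apply_inr]
        constructor
        · intro h0
          have := (hB i j).1 h0
          simp [hN, Matrix.fromCols_apply_inr, Matrix.map_apply, this]
        · intro h1
          have := (hB i j).2 h1
          simp [hN, Matrix.fromCols_apply_inr, Matrix.map_apply, this]
    apply (rank_eq_card_iff_vecMul_s1 N).mpr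
    intro v hv
    funext j
    exact colorStep_vecMul_eq_zero hcolor hNmem hv j (Set.mem_univ j)
end

section
/- Let A be an n×n pattern matrix and B an n×m pattern matrix, and let Ā be obtained from A by keeping all off-diagonal entries and replacing each diagonal entry A_ii by ∗ if A_ii = 0 and by ? otherwise. Then the structured system (A,B) is strongly structurally controllable if and only if both G([A B]) and G([Ā B]) are colorable. -/
open Matrix

lemma colLemma {n : ℕ} (p : Fin n → PSym) (W : Finset (Fin n))
    (hstall : ∀ j ∈ W, p j = PSym.star → ∃ k ∈ W, k ≠ j ∧ p k ≠ PSym.zero)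
    (d : Fin n) :
    ∃ v : Fin n → ℝ,
      (∀ k, p k = PSym.zero → v k = 0) ∧
      (∀ k, p k = PSym.star → v k ≠ 0) ∧
      (∑ k ∈ W, v k = 0) ∧
      (p d = PSym.star → v d = -1) ∧
      (p d = PSym.arb → v d ≠ -1) := by
  classical
  set u : Fin n → ℝ := fun k => if p k = PSym.star ∧ k = d then -1 else 0 with hu
  set s : Fin n → ℝ := fun k => if p k = PSym.star ∧ k ≠ d then 1 else 0 with hs
  by_cases hB : ∃ b ∈ W, p b ≠ PSym.zero
  · -- there is a white nonzero row; choose a balancer b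
    have hbsel : ∃ b ∈ W, (p b = PSym.arb ∨ (p b = PSym.star ∧ ∀ k ∈ W, p k ≠ PSym.arb)) ∧
        (b = d → p d ≠ PSym.star) := by
      by_cases ha : ∃ b ∈ W, p b = PSym.arb
      · obtain ⟨b, hbW, hbarb⟩ := ha
        exact ⟨b, hbW, Or.inl hbarb, fun hbd hds => by rw [hbd, hds] at hbarb; cases hbarb⟩
      · push_neg at ha
        obtain ⟨b0, hb0W, hb0⟩ := hB
        have hb0star : p b0 = PSym.star := by
          cases h : p b0 with
          | zero => exact absurd h hb0
          | star => rfl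
          | arb => exact absurd h (ha b0 hb0W)
        by_cases hbd : b0 = d ∧ p d = PSym.star
        · obtain ⟨k, hkW, hkne, hknz⟩ := hstall b0 hb0W hb0star
          have hkstar : p k = PSym.star := by
            cases h : p k with
            | zero => exact absurd h hknz
            | star => rfl
            | arb => exact absurd h (ha k hkW)
          refine ⟨k, hkW, Or.inr ⟨hkstar, ha⟩, fun hkd _ => ?_⟩
          exact hkne (hkd.trans hbd.1.symm)
        · refine ⟨b0, hb0W, Or.inr ⟨hb0star, ha⟩, fun h1 h2 => hbd ⟨h1, h2⟩⟩
    obtain ⟨b, hbW, hbprop, hbd⟩ := hbsel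
    have hbnz : p b ≠ PSym.zero := by
      rcases hbprop with h | ⟨h, _⟩ <;> simp [h]
    set E : ℝ := ∑ k ∈ W.erase b, u k with hE
    set A : ℝ := ∑ k ∈ W.erase b, s k with hA
    have hA0 : 0 ≤ A := Finset.sum_nonneg (fun k _ => by
      simp only [hs]; split <;> norm_num)
    set t : ℝ := if A = 0 then 1 else (|E| + 2) / A with ht
    have htpos : 0 < t := by
      rw [ht]; split
      · norm_num
      · apply div_pos (by positivity) (lt_of_le_of_ne hA0 (Ne.symm (by assumption)))
    have htA : A ≠ 0 → t * A + E = |E| + 2 + E := by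
      intro hAne
      rw [ht, if_neg hAne, div_mul_cancel₀ _ hAne]
    have htA2 : A ≠ 0 → 2 ≤ t * A + E := by
      intro hAne; rw [htA hAne]
      have := abs_nonneg E
      have := neg_abs_le E
      linarith
    set v : Fin n → ℝ := Function.update (fun k => t * s k + u k) b (-(t * A + E)) with hv
    have hvne : ∀ k, k ≠ b → v k = t * s k + u k := fun k hk => Function.update_of_ne hk _ _
    have hEbd : b = d → E = 0 := by
      intro hbd'
      apply Finset.sum_eq_zero
      intro k hk
      have : k ≠ d := by
        rw [← hbd']; exact Finset.ne_of_mem_erase hk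
      simp [hu, this]
    -- key: the value at b
    have hvb : v b = -(t * A + E) := Function.update_self _ _ _
    have hbstarval : p b = PSym.star → t * A + E ≠ 0 ∧ v b ≠ 0 := by
      intro hbstar
      have hnoarb : ∀ k ∈ W, p k ≠ PSym.arb := by
        rcases hbprop with h | ⟨_, h⟩
        · rw [h] at hbstar; cases hbstar
        · exact h
      have key : t * A + E ≠ 0 := by
        by_cases hAne : A = 0
        · -- all slopes zero; stalledness forces d star in erase, E = -1
          obtain ⟨k, hkW, hkne, hknz⟩ := hstall b hbW hbstar
          have hkstar : p k = PSym.star := by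
            cases h : p k with
            | zero => exact absurd h hknz
            | star => rfl
            | arb => exact absurd h (hnoarb k hkW)
          have hkerase : k ∈ W.erase b := Finset.mem_erase.2 ⟨hkne, hkW⟩
          have hsk : s k = 0 := by
            have := (Finset.sum_eq_zero_iff_of_nonneg (fun j _ => by
              simp only [hs]; split <;> norm_num)).1 (hA ▸ hAne) k hkerase
            exact this
          have hkd : k = d := by
            by_contra hkd
            simp [hs, hkstar, hkd] at hsk
          have hds : p d = PSym.star := hkd ▸ hkstar
          have hEval : E = -1 := by
            rw [hE]
            rw [Finset.sum_eq_single_of_mem k hkerase]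
            · simp [hu, hkd, hds]
            · intro j _ hj
              have : j ≠ d := fun h => hj (h.trans hkd.symm)
              simp [hu, this]
          rw [hAne, mul_zero, zero_add, hEval]
          norm_num
        · have := htA2 hAne; linarith
      exact ⟨key, by rw [hvb]; exact neg_ne_zero.2 key⟩
    refine ⟨v, ?_, ?_, ?_, ?_, ?_⟩
    · intro k hk
      have hkb : k ≠ b := fun h => hbnz (h ▸ hk)
      rw [hvne k hkb]
      simp [hu, hs, hk]
    · intro k hk
      by_cases hkb : k = b
      · rw [hkb]; exact ((hbstarval (hkb ▸ hk)).2)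
      · rw [hvne k hkb]
        by_cases hkd : k = d
        · have hds : p d = PSym.star := hkd ▸ hk
          simp [hu, hs, hkd, hds]
        · have hsk : s k = 1 := by simp [hs, hk, hkd]
          have huk : u k = 0 := by simp [hu, hkd]
          rw [hsk, huk, mul_one, add_zero]
          exact ne_of_gt htpos
    · rw [hv, Finset.sum_update_of_mem hbW, ← Finset.erase_eq,
        Finset.sum_add_distrib, ← Finset.mul_sum, ← hA, ← hE]
      ring
    · intro hds
      have hdb : d ≠ b := fun h => hbd h.symm hds
      rw [hvne d hdb]
      simp [hu, hs, hds]
    · intro hda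
      by_cases hdb : d = b
      · rw [hdb, hvb]
        have hE0 : E = 0 := hEbd hdb.symm
        by_cases hAne : A = 0
        · rw [hAne, hE0]; norm_num
        · have := htA hAne
          rw [hE0] at this ⊢
          rw [this]
          norm_num
      · rw [hvne d hdb]
        simp [hu, hs, hda]
  · -- no white nonzero rows: all white entries are structurally zero
    push_neg at hB
    refine ⟨fun k => 1 * s k + u k, ?_, ?_, ?_, ?_, ?_⟩
    · intro k hk; simp [hu, hs, hk]
    · intro k hk
      by_cases hkd : k = d
      · have hds : p d = PSym.star := hkd ▸ hk
        simp [hu, hs, hkd, hds]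
      · simp [hu, hs, hk, hkd]
    · apply Finset.sum_eq_zero
      intro k hk
      have := hB k hk
      simp [hu, hs, this]
    · intro hds; simp [hu, hs, hds]
    · intro hda; simp [hu, hs, hda]

lemma exists_stalled {n : ℕ} {C : Type*} (M : Matrix (Fin n) C PSym)
    (h : ¬ PatternColorable M) :
    ∃ T : Finset (Fin n), ColorStep M ↑T ∧
      ∀ (c : C) (j : Fin n), ¬(M j c = PSym.star ∧ j ∉ T ∧
        ∀ k, M k c ≠ PSym.zero → k ∉ T → k = j) := by
  classical
  suffices haux : ∀ (k : ℕ) (S : Finset (Fin n)), ColorStep M ↑S → n - S.card ≤ k →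
      ∃ T : Finset (Fin n), ColorStep M ↑T ∧
      ∀ (c : C) (j : Fin n), ¬(M j c = PSym.star ∧ j ∉ T ∧
        ∀ k, M k c ≠ PSym.zero → k ∉ T → k = j) by
    exact haux n ∅ (by simpa using ColorStep.init (M := M)) (by simp)
  intro k
  induction k with
  | zero =>
    intro S hS hcard
    exfalso
    apply h
    have hcards : S.card = Fintype.card (Fin n) := by
      have h1 : S.card ≤ Fintype.card (Fin n) := Finset.card_le_univ S
      rw [Fintype.card_fin] at h1 ⊢
      omega
    have : S = Finset.univ := Finset.eq_univ_of_card S hcards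
    rw [this] at hS
    simpa [PatternColorable] using hS
  | succ k ih =>
    intro S hS hcard
    by_cases hstep : ∃ (c : C) (j : Fin n), M j c = PSym.star ∧ j ∉ S ∧
        ∀ k, M k c ≠ PSym.zero → k ∉ S → k = j
    · obtain ⟨c, j, h1, h2, h3⟩ := hstep
      have hnew : ColorStep M ↑(insert j S) := by
        rw [Finset.coe_insert]
        exact ColorStep.step ↑S c j hS h1 (by simpa using h2)
          (fun k hk hkS => h3 k hk (by simpa using hkS))
      apply ih (insert j S) hnew
      rw [Finset.card_insert_of_notMem h2]
      omega
    · refine ⟨S, hS, fun c j hc => hstep ⟨c, j, hc⟩⟩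

lemma notColorable_deficient {n : ℕ} {C : Type*} [Fintype C] [DecidableEq C]
    (M : Matrix (Fin n) C PSym) (h : ¬ PatternColorable M) (d : C → Fin n) :
    ∃ N : Matrix (Fin n) C ℝ, N ∈ PatternClass M ∧
      (∃ x : Fin n → ℝ, x ≠ 0 ∧ x ᵥ* N = 0) ∧
      ∀ c, (M (d c) c = PSym.star → N (d c) c = -1) ∧
           (M (d c) c = PSym.arb → N (d c) c ≠ -1) := by
  classical
  obtain ⟨T, hT, hstalled⟩ := exists_stalled M h
  set W : Finset (Fin n) := Tᶜ with hW
  have hWne : W.Nonempty := by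
    rw [Finset.nonempty_iff_ne_empty]
    intro hWe
    apply h
    have : T = Finset.univ := by
      rwa [← Finset.compl_eq_empty_iff, ← hW]
    rw [this] at hT
    simpa [PatternColorable] using hT
  have hstall : ∀ c, ∀ j ∈ W, M j c = PSym.star →
      ∃ k ∈ W, k ≠ j ∧ M k c ≠ PSym.zero := by
    intro c j hjW hjs
    have hjT : j ∉ T := Finset.mem_compl.1 hjW
    have := hstalled c j
    push_neg at this
    obtain ⟨k, hk1, hk2, hk3⟩ := this hjs hjT
    exact ⟨k, Finset.mem_compl.2 hk2, hk3, hk1⟩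
  choose v hv0 hvs hvsum hvd1 hvd2 using
    fun c => colLemma (fun k => M k c) W (hstall c) (d c)
  refine ⟨Matrix.of (fun i c => v c i), fun i c => ⟨hv0 c i, hvs c i⟩, ?_, fun c => ⟨hvd1 c, hvd2 c⟩⟩
  obtain ⟨w, hw⟩ := hWne
  refine ⟨fun k => if k ∈ W then 1 else 0, ?_, ?_⟩
  · intro hx0
    have := congrFun hx0 w
    simp [hw] at this
  · funext c
    show ∑ k, (if k ∈ W then (1:ℝ) else 0) * v c k = 0
    have : ∀ k, (if k ∈ W then (1:ℝ) else 0) * v c k = if k ∈ W then v c k else 0 := by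
      intro k; split <;> simp
    rw [Finset.sum_congr rfl (fun k _ => this k), Finset.sum_ite_mem, Finset.univ_inter]
    exact hvsum c


lemma colorStep_vec_zero {n : ℕ} {C : Type*} [Fintype C]
    (M : Matrix (Fin n) C PSym) (N : Matrix (Fin n) C ℂ)
    (h0 : ∀ i c, M i c = PSym.zero → N i c = 0)
    (hs : ∀ i c, M i c = PSym.star → N i c ≠ 0)
    {S : Set (Fin n)} (hS : ColorStep M S)
    (x : Fin n → ℂ) (hx : x ᵥ* N = 0) : ∀ j ∈ S, x j = 0 := by
  induction hS with
  | init => intro j hj; exact absurd hj (Set.notMem_empty j)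
  | step S c j hS hstar hwhite huniq ih =>
    intro k hk
    rcases Set.mem_insert_iff.1 hk with rfl | hkS
    · have hc : (x ᵥ* N) c = 0 := congrFun hx c
      rw [Matrix.vecMul, dotProduct] at hc
      have : ∑ i, x i * N i c = x k * N k c := by
        apply Finset.sum_eq_single k
        · intro b _ hb
          by_cases hbS : b ∈ S
          · rw [ih b hbS, zero_mul]
          · by_cases hbz : M b c = PSym.zero
            · rw [h0 b c hbz, mul_zero]
            · exact absurd (huniq b hbz hbS) hb
        · intro h; exact absurd (Finset.mem_univ k) h
      rw [this] at hc
      exact (mul_eq_zero.1 hc).resolve_right (hs k c hstar)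
    · exact ih k hkS


lemma rank_eq_of_vecMul_inj {n : ℕ} {C : Type*} [Fintype C] [DecidableEq C]
    (N : Matrix (Fin n) C ℂ) (h : ∀ x : Fin n → ℂ, x ᵥ* N = 0 → x = 0) : N.rank = n := by
  rw [← Matrix.rank_transpose]
  have hinj : Function.Injective Nᵀ.mulVecLin := by
    rw [← LinearMap.ker_eq_bot, LinearMap.ker_eq_bot']
    intro x hx
    apply h
    rwa [Matrix.mulVecLin_apply, Matrix.mulVec_transpose] at hx
  rw [Matrix.rank, LinearMap.finrank_range_of_inj hinj, Module.finrank_pi, Fintype.card_fin]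

lemma rank_ne_of_vecMul {n : ℕ} {C : Type*} [Fintype C] [DecidableEq C]
    (N : Matrix (Fin n) C ℂ) (x : Fin n → ℂ) (hx : x ≠ 0) (h : x ᵥ* N = 0) : N.rank ≠ n := by
  intro hr
  rw [← Matrix.rank_transpose, Matrix.rank] at hr
  have := LinearMap.finrank_range_add_finrank_ker Nᵀ.mulVecLin
  rw [hr, Module.finrank_pi, Fintype.card_fin] at this
  have hker : Module.finrank ℂ (LinearMap.ker Nᵀ.mulVecLin) = 0 := by omega
  rw [Submodule.finrank_eq_zero] at hker
  apply hx
  have : x ∈ LinearMap.ker Nᵀ.mulVecLin := by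
    rw [LinearMap.mem_ker, Matrix.mulVecLin_apply, Matrix.mulVec_transpose, h]
  rwa [hker, Submodule.mem_bot] at this

lemma vecMul_map_ofReal {n : ℕ} {C : Type*} [Fintype C]
    (N : Matrix (Fin n) C ℝ) (x : Fin n → ℝ) (h : x ᵥ* N = 0) :
    (fun k => (x k : ℂ)) ᵥ* (N.map Complex.ofReal) = 0 := by
  funext c
  have hc : ∑ k, x k * N k c = 0 := congrFun h c
  show ∑ k, (x k : ℂ) * ((N k c : ℝ) : ℂ) = 0
  calc ∑ k, (x k : ℂ) * ((N k c : ℝ) : ℂ) = ((∑ k, x k * N k c : ℝ) : ℂ) := by push_cast; rfl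
    _ = 0 := by rw [hc]; exact Complex.ofReal_zero

lemma rank_full_of_colorable {n : ℕ} {C : Type*} [Fintype C] [DecidableEq C]
    (M : Matrix (Fin n) C PSym) (hM : PatternColorable M) (N : Matrix (Fin n) C ℂ)
    (h0 : ∀ i c, M i c = PSym.zero → N i c = 0)
    (hs : ∀ i c, M i c = PSym.star → N i c ≠ 0) : N.rank = n := by
  apply rank_eq_of_vecMul_inj
  intro x hx
  funext j
  exact colorStep_vec_zero M N h0 hs hM x hx j (Set.mem_univ j)

lemma colorable_of_n_zero {C : Type*} (M : Matrix (Fin 0) C PSym) : PatternColorable M := by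
  unfold PatternColorable
  have : (Set.univ : Set (Fin 0)) = ∅ := Set.univ_eq_empty_iff.2 inferInstance
  rw [this]
  exact ColorStep.init


/-- **Theorem 3 (graph-theoretic conditions for controllability).** `(𝒜, ℬ)` is strongly
structurally controllable iff both `G([𝒜 ℬ])` and `G([𝒜bar ℬ])` are colorable. -/
theorem ssc_iff_colorable {n m : ℕ} (𝒜 : Matrix (Fin n) (Fin n) PSym)
    (ℬ : Matrix (Fin n) (Fin m) PSym) :
    StrStrControllable 𝒜 ℬ ↔
      PatternColorable (Matrix.fromCols 𝒜 ℬ) ∧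
      PatternColorable (Matrix.fromCols (barPattern 𝒜) ℬ) := by
  constructor
  · intro hssc
    rcases Nat.eq_zero_or_pos n with rfl | hn
    · exact ⟨colorable_of_n_zero _, colorable_of_n_zero _⟩
    constructor
    · by_contra hc
      obtain ⟨N, hN, ⟨x, hx, hxN⟩, -⟩ :=
        notColorable_deficient (Matrix.fromCols 𝒜 ℬ) hc (fun _ => ⟨0, hn⟩)
      set A : Matrix (Fin n) (Fin n) ℝ := fun i j => N i (Sum.inl j) with hAdef
      set B : Matrix (Fin n) (Fin m) ℝ := fun i j => N i (Sum.inr j) with hBdef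
      have hA : A ∈ PatternClass 𝒜 := by
        intro i j
        have := hN i (Sum.inl j)
        rwa [Matrix.fromCols_apply_inl] at this
      have hB : B ∈ PatternClass ℬ := by
        intro i j
        have := hN i (Sum.inr j)
        rwa [Matrix.fromCols_apply_inr] at this
      have hctrl := hssc A hA B hB 0
      rw [zero_smul, sub_zero] at hctrl
      have heq : Matrix.fromCols (A.map Complex.ofReal) (B.map Complex.ofReal)
          = N.map Complex.ofReal := by
        ext i c
        cases c with
        | inl j => rw [Matrix.fromCols_apply_inl, Matrix.map_apply, Matrix.map_apply]
        | inr j => rw [Matrix.fromCols_apply_inr, Matrix.map_apply, Matrix.map_apply]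
      rw [heq] at hctrl
      have hxC : (fun k => (x k : ℂ)) ≠ 0 := by
        obtain ⟨k, hk⟩ := Function.ne_iff.1 hx
        exact Function.ne_iff.2 ⟨k, by simpa using hk⟩
      exact rank_ne_of_vecMul _ _ hxC (vecMul_map_ofReal N x hxN) hctrl
    · by_contra hc
      obtain ⟨N, hN, ⟨x, hx, hxN⟩, hdiag⟩ :=
        notColorable_deficient (Matrix.fromCols (barPattern 𝒜) ℬ) hc
          (Sum.elim id (fun _ => ⟨0, hn⟩))
      set A : Matrix (Fin n) (Fin n) ℝ :=
        fun i j => N i (Sum.inl j) + if i = j then 1 else 0 with hAdef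
      set B : Matrix (Fin n) (Fin m) ℝ := fun i j => N i (Sum.inr j) with hBdef
      have hA : A ∈ PatternClass 𝒜 := by
        intro i j
        by_cases hij : i = j
        · subst hij
          have hd := hdiag (Sum.inl i)
          rw [Sum.elim_inl, id_eq, Matrix.fromCols_apply_inl] at hd
          constructor
          · intro h0
            have : barPattern 𝒜 i i = PSym.star := by simp [barPattern, h0]
            have := hd.1 this
            simp [hAdef, this]
          · intro hstar
            have : barPattern 𝒜 i i = PSym.arb := by simp [barPattern, hstar]
            have hne := hd.2 this
            simp only [hAdef]
            intro hcon
            apply hne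
            simp at hcon
            linarith
        · have := hN i (Sum.inl j)
          rw [Matrix.fromCols_apply_inl] at this
          rw [barPattern, if_neg hij] at this
          simpa [hAdef, hij] using this
      have hB : B ∈ PatternClass ℬ := by
        intro i j
        have := hN i (Sum.inr j)
        rwa [Matrix.fromCols_apply_inr] at this
      have hctrl := hssc A hA B hB 1
      rw [one_smul] at hctrl
      have heq : Matrix.fromCols (A.map Complex.ofReal - 1) (B.map Complex.ofReal)
          = N.map Complex.ofReal := by
        ext i c
        cases c with
        | inl j =>
          simp only [Matrix.fromCols_apply_inl, Matrix.sub_apply, Matrix.map_apply,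
            Matrix.one_apply]
          simp only [hAdef]
          split <;> push_cast <;> ring
        | inr j => rw [Matrix.fromCols_apply_inr, Matrix.map_apply, Matrix.map_apply]
      rw [heq] at hctrl
      have hxC : (fun k => (x k : ℂ)) ≠ 0 := by
        obtain ⟨k, hk⟩ := Function.ne_iff.1 hx
        exact Function.ne_iff.2 ⟨k, by simpa using hk⟩
      exact rank_ne_of_vecMul _ _ hxC (vecMul_map_ofReal N x hxN) hctrl
  · rintro ⟨h1, h2⟩ A hA B hB l
    by_cases hl : l = 0
    · subst hl
      rw [zero_smul, sub_zero]
      apply rank_full_of_colorable (Matrix.fromCols 𝒜 ℬ) h1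
      · intro i c
        cases c with
        | inl j =>
          intro h
          rw [Matrix.fromCols_apply_inl] at h ⊢
          simp [Matrix.map_apply, (hA i j).1 h]
        | inr j =>
          intro h
          rw [Matrix.fromCols_apply_inr] at h ⊢
          simp [Matrix.map_apply, (hB i j).1 h]
      · intro i c
        cases c with
        | inl j =>
          intro h
          rw [Matrix.fromCols_apply_inl] at h ⊢
          simpa [Matrix.map_apply] using (hA i j).2 h
        | inr j =>
          intro h
          rw [Matrix.fromCols_apply_inr] at h ⊢
          simpa [Matrix.map_apply] using (hB i j).2 h
    · apply rank_full_of_colorable (Matrix.fromCols (barPattern 𝒜) ℬ) h2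
      · intro i c
        cases c with
        | inl j =>
          intro h
          rw [Matrix.fromCols_apply_inl] at h ⊢
          rw [barPattern] at h
          by_cases hij : i = j
          · rw [if_pos hij] at h
            split at h <;> simp at h
          · rw [if_neg hij] at h
            simp [Matrix.sub_apply, Matrix.map_apply, (hA i j).1 h,
              Matrix.smul_apply, Matrix.one_apply_ne hij]
        | inr j =>
          intro h
          rw [Matrix.fromCols_apply_inr] at h ⊢
          simp [Matrix.map_apply, (hB i j).1 h]
      · intro i c
        cases c with
        | inl j =>
          intro h
          rw [Matrix.fromCols_apply_inl] at h ⊢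
          rw [barPattern] at h
          by_cases hij : i = j
          · subst hij
            rw [if_pos rfl] at h
            have h0 : 𝒜 i i = PSym.zero := by
              split at h
              · assumption
              · simp at h
            simp [Matrix.sub_apply, Matrix.map_apply, (hA i i).1 h0,
              Matrix.smul_apply, Matrix.one_apply_eq, hl]
          · rw [if_neg hij] at h
            simp [Matrix.sub_apply, Matrix.map_apply, Matrix.smul_apply,
              Matrix.one_apply_ne hij]
            exact fun hc => absurd (by exact_mod_cast hc) ((hA i j).2 h)
        | inr j =>
          intro h
          rw [Matrix.fromCols_apply_inr] at h ⊢
          simpa [Matrix.map_apply] using (hB i j).2 h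
end

section
/- Let A be an n×n pattern matrix none of whose diagonal entries is 0, let B be an n×m pattern matrix, and let Ā be obtained from A by keeping all off-diagonal entries and replacing each diagonal entry A_ii by ∗ if A_ii = 0 and by ? otherwise. Then the structured system (A,B) is strongly structurally controllable if and only if G([Ā B]) is colorable. -/
open Matrix

-- ### Auxiliary machinery ###


/-- If the left kernel of `H` is trivial, `H` has full row rank. -/
lemma rank_eq_card_of_leftker {R C F : Type*} [Fintype R] [Fintype C] [Field F]
    (H : Matrix R C F) (h : ∀ z : R → F, H.vecMul z = 0 → z = 0) :
    H.rank = Fintype.card R := by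
  have hker : LinearMap.ker (Hᵀ.mulVecLin) = ⊥ := by
    rw [LinearMap.ker_eq_bot']
    intro z hz
    exact h z (by rw [← Matrix.mulVec_transpose]; exact hz)
  have := LinearMap.finrank_range_add_finrank_ker (Hᵀ.mulVecLin)
  rw [hker, finrank_bot] at this
  have h2 : Hᵀ.rank = Fintype.card R := by
    rw [Matrix.rank]
    simpa [Module.finrank_fintype_fun_eq_card] using this
  rw [← Matrix.rank_transpose]; exact h2

/-- If some nonzero vector is in the left kernel, `H` doesn't have full row rank. -/
lemma rank_ne_card_of_leftvec {R C F : Type*} [Fintype R] [Fintype C] [Field F]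
    (H : Matrix R C F) (z : R → F) (hz : z ≠ 0) (hzH : H.vecMul z = 0) :
    H.rank ≠ Fintype.card R := by
  intro hrank
  have := LinearMap.finrank_range_add_finrank_ker (Hᵀ.mulVecLin)
  have hr : Module.finrank F ↥(LinearMap.range Hᵀ.mulVecLin) = Fintype.card R := by
    rw [← Matrix.rank_transpose] at hrank
    simpa [Matrix.rank] using hrank
  rw [hr, Module.finrank_fintype_fun_eq_card] at this
  have hk : Module.finrank F ↥(LinearMap.ker Hᵀ.mulVecLin) = 0 := by omega
  have hbot : LinearMap.ker (Hᵀ.mulVecLin) = ⊥ := Submodule.finrank_eq_zero.mp hk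
  apply hz
  have : z ∈ LinearMap.ker (Hᵀ.mulVecLin) := by
    simp [LinearMap.mem_ker, Matrix.mulVecLin_apply, Matrix.mulVec_transpose, hzH]
  rwa [hbot, Submodule.mem_bot] at this

/-- Pattern compatibility over an arbitrary field. -/
def PCompat {R C F : Type*} [Zero F] (M : Matrix R C PSym) (H : Matrix R C F) : Prop :=
  ∀ i j, (M i j = PSym.zero → H i j = 0) ∧ (M i j = PSym.star → H i j ≠ 0)

lemma colorstep_null {R C F : Type*} [Fintype R] [DecidableEq R] [Field F]
    {M : Matrix R C PSym} {H : Matrix R C F} (hc : PCompat M H)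
    {S : Set R} (hS : ColorStep M S) :
    ∀ z : R → F, H.vecMul z = 0 → ∀ i ∈ S, z i = 0 := by
  induction hS with
  | init => simp
  | step S c j hS hstar hwhite huniq ih =>
    intro z hz i hi
    rcases hi with rfl | hi
    · have hcol : ∑ k, z k * H k c = 0 := congrFun hz c
      have hsingle : ∑ k, z k * H k c = z i * H i c := by
        apply Finset.sum_eq_single
        · intro k _ hk
          by_cases hzero : M k c = PSym.zero
          · rw [(hc k c).1 hzero, mul_zero]
          · by_cases hks : k ∈ S
            · rw [ih z hz k hks, zero_mul]
            · exact absurd (huniq k hzero hks) hk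
        · intro h; exact absurd (Finset.mem_univ i) h
      rw [hsingle] at hcol
      exact (mul_eq_zero.mp hcol).resolve_right ((hc i c).2 hstar)
    · exact ih z hz i hi

section Construction
variable {R C : Type*} [Fintype R] [LinearOrder R]

/-- White rows with a `∗` in column `c`. -/
def wstar (M : Matrix R C PSym) (S : Finset R) (c : C) : Finset R :=
  Finset.univ.filter (fun k => k ∉ S ∧ M k c = PSym.star)

/-- White rows with a `?` in column `c`. -/
def warb (M : Matrix R C PSym) (S : Finset R) (c : C) : Finset R :=
  Finset.univ.filter (fun k => k ∉ S ∧ M k c = PSym.arb)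

/-- The witness matrix built from a stalled coloring `S`. -/
noncomputable def consA (M : Matrix R C PSym) (S : Finset R) : Matrix R C ℝ := fun k c =>
  if k ∈ S then (if M k c = PSym.star then 1 else 0)
  else if M k c = PSym.zero then 0
  else if M k c = PSym.star then
    (if (warb M S c).Nonempty then 1
     else if hs : (wstar M S c).Nonempty then
       (if k = (wstar M S c).min' hs then 1 - ((wstar M S c).card : ℝ) else 1)
     else 1)
  else
    (if hq : (warb M S c).Nonempty then
       (if k = (warb M S c).min' hq then -((wstar M S c).card : ℝ) else 0)
     else 0)

lemma mem_wstar {M : Matrix R C PSym} {S : Finset R} {c : C} {k : R} :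
    k ∈ wstar M S c ↔ k ∉ S ∧ M k c = PSym.star := by simp [wstar]

lemma mem_warb {M : Matrix R C PSym} {S : Finset R} {c : C} {k : R} :
    k ∈ warb M S c ↔ k ∉ S ∧ M k c = PSym.arb := by simp [warb]

/-- Stalledness of `S` for `M`. -/
def Stalled (M : Matrix R C PSym) (S : Finset R) : Prop :=
  ∀ (c : C) (j : R), M j c = PSym.star → j ∉ S →
    ¬ (∀ k : R, M k c ≠ PSym.zero → k ∉ S → k = j)

lemma wstar_card_ge_two {M : Matrix R C PSym} {S : Finset R} (hst : Stalled M S)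
    {c : C} {k : R} (hk : k ∉ S) (hkcs : M k c = PSym.star)
    (hq : ¬ (warb M S c).Nonempty) : 2 ≤ (wstar M S c).card := by
  have hkmem : k ∈ wstar M S c := mem_wstar.mpr ⟨hk, hkcs⟩
  by_contra hlt
  push_neg at hlt
  have hcard1 : (wstar M S c).card = 1 := by
    have : 1 ≤ (wstar M S c).card := Finset.card_pos.mpr ⟨k, hkmem⟩
    omega
  obtain ⟨a, ha⟩ := Finset.card_eq_one.mp hcard1
  have hka : k = a := by have := ha ▸ hkmem; simpa using this
  subst hka
  refine hst c k hkcs hk ?_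
  intro k' h1 h2
  cases hMk : M k' c with
  | zero => exact absurd hMk h1
  | star =>
    have : k' ∈ wstar M S c := mem_wstar.mpr ⟨h2, hMk⟩
    rw [ha] at this; simpa using this
  | arb =>
    exact absurd ⟨k', mem_warb.mpr ⟨h2, hMk⟩⟩ hq

/-- The witness matrix lies in the pattern class. -/
lemma consA_mem {M : Matrix R C PSym} {S : Finset R} (hst : Stalled M S) :
    consA M S ∈ PatternClass M := by
  intro i j
  constructor
  · intro h0
    by_cases hi : i ∈ S
    · simp [consA, hi, h0]
    · simp [consA, hi, h0]
  · intro hstar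
    by_cases hi : i ∈ S
    · simp [consA, hi, hstar]
    · by_cases hq : (warb M S j).Nonempty
      · have hval : consA M S i j = 1 := by
          unfold consA
          rw [if_neg hi, if_neg (by simp [hstar]), if_pos hstar, if_pos hq]
        rw [hval]; norm_num
      · have h2 := wstar_card_ge_two hst hi hstar hq
        have hs : (wstar M S j).Nonempty := ⟨i, mem_wstar.mpr ⟨hi, hstar⟩⟩
        by_cases hmin : i = (wstar M S j).min' hs
        · have hval : consA M S i j = 1 - ((wstar M S j).card : ℝ) := by
            unfold consA
            rw [if_neg hi, if_neg (by simp [hstar]), if_pos hstar, if_neg hq, dif_pos hs,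
              if_pos hmin]
          rw [hval]
          have : (2:ℝ) ≤ ((wstar M S j).card : ℝ) := by exact_mod_cast h2
          intro hcontra
          nlinarith
        · have hval : consA M S i j = 1 := by
            unfold consA
            rw [if_neg hi, if_neg (by simp [hstar]), if_pos hstar, if_neg hq, dif_pos hs,
              if_neg hmin]
          rw [hval]; norm_num

lemma consA_colsum (M : Matrix R C PSym) (S : Finset R) (c : C) :
    ∑ k ∈ Finset.univ.filter (fun k => k ∉ S), consA M S k c = 0 := by
  classical
  have hsub : wstar M S c ∪ warb M S c ⊆ Finset.univ.filter (fun k => k ∉ S) := by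
    intro k hk
    rcases Finset.mem_union.mp hk with hk | hk
    · simp [(mem_wstar.mp hk).1]
    · simp [(mem_warb.mp hk).1]
  have hvanish : ∀ k ∈ Finset.univ.filter (fun k => k ∉ S),
      k ∉ wstar M S c ∪ warb M S c → consA M S k c = 0 := by
    intro k hk hk2
    have hkS : k ∉ S := by simpa using hk
    have hzero : M k c = PSym.zero := by
      cases hM : M k c with
      | zero => rfl
      | star => exact absurd (Finset.mem_union_left _ (mem_wstar.mpr ⟨hkS, hM⟩)) hk2
      | arb => exact absurd (Finset.mem_union_right _ (mem_warb.mpr ⟨hkS, hM⟩)) hk2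
    unfold consA
    rw [if_neg hkS, if_pos hzero]
  have hdisj : Disjoint (wstar M S c) (warb M S c) := by
    rw [Finset.disjoint_left]
    intro k h1 h2
    rw [mem_wstar] at h1; rw [mem_warb] at h2
    rw [h1.2] at h2; exact PSym.noConfusion h2.2
  rw [← Finset.sum_subset hsub hvanish, Finset.sum_union hdisj]
  by_cases hq : (warb M S c).Nonempty
  · have h1 : ∀ k ∈ wstar M S c, consA M S k c = 1 := by
      intro k hk
      obtain ⟨hkS, hkst⟩ := mem_wstar.mp hk
      unfold consA
      rw [if_neg hkS, if_neg (by simp [hkst]), if_pos hkst, if_pos hq]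
    have h2 : ∀ k ∈ warb M S c, consA M S k c =
        (if k = (warb M S c).min' hq then -((wstar M S c).card : ℝ) else 0) := by
      intro k hk
      obtain ⟨hkS, hka⟩ := mem_warb.mp hk
      unfold consA
      rw [if_neg hkS, if_neg (by simp [hka]), if_neg (by simp [hka]), dif_pos hq]
    rw [Finset.sum_congr rfl h1, Finset.sum_congr rfl h2, Finset.sum_const,
      Finset.sum_ite_eq' (warb M S c) ((warb M S c).min' hq)
        (fun _ => -((wstar M S c).card : ℝ)), if_pos (Finset.min'_mem _ hq)]
    simp
  · have hwe : warb M S c = ∅ := Finset.not_nonempty_iff_eq_empty.mp hq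
    rw [hwe, Finset.sum_empty, add_zero]
    by_cases hs : (wstar M S c).Nonempty
    · have h1 : ∀ k ∈ wstar M S c, consA M S k c =
          1 + (if k = (wstar M S c).min' hs then -((wstar M S c).card : ℝ) else 0) := by
        intro k hk
        obtain ⟨hkS, hkst⟩ := mem_wstar.mp hk
        unfold consA
        rw [if_neg hkS, if_neg (by simp [hkst]), if_pos hkst, if_neg hq, dif_pos hs]
        by_cases hmin : k = (wstar M S c).min' hs
        · rw [if_pos hmin, if_pos hmin]; ring
        · rw [if_neg hmin, if_neg hmin]; ring
      rw [Finset.sum_congr rfl h1, Finset.sum_add_distrib, Finset.sum_const,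
        Finset.sum_ite_eq' (wstar M S c) ((wstar M S c).min' hs)
          (fun _ => -((wstar M S c).card : ℝ)), if_pos (Finset.min'_mem _ hs)]
      simp
    · rw [Finset.not_nonempty_iff_eq_empty.mp hs, Finset.sum_empty]

end Construction


lemma exists_null_of_not_colorable {R C : Type*} [Fintype R] [LinearOrder R] [Fintype C]
    (M : Matrix R C PSym) (h : ¬ ColorStep M Set.univ) :
    ∃ A ∈ PatternClass M, ∃ z : R → ℝ, z ≠ 0 ∧ Matrix.vecMul z A = 0 := by
  classical
  set P : ℕ → Prop := fun k => ∃ S : Set R, ColorStep M S ∧ S.ncard = k with hPdef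
  have hP0 : P 0 := ⟨∅, ColorStep.init, by simp⟩
  have hPK : P (Nat.findGreatest P (Fintype.card R)) :=
    Nat.findGreatest_spec (Nat.zero_le _) hP0
  obtain ⟨S, hS, hScard⟩ := hPK
  have hstall : ∀ (c : C) (j : R), M j c = PSym.star → j ∉ S →
      ¬ (∀ k : R, M k c ≠ PSym.zero → k ∉ S → k = j) := by
    intro c j h1 h2 h3
    have hstep := ColorStep.step S c j hS h1 h2 h3
    have hcard : (insert j S).ncard = Nat.findGreatest P (Fintype.card R) + 1 := by
      rw [Set.ncard_insert_of_notMem h2 (Set.toFinite S), hScard]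
    have hle : (insert j S).ncard ≤ Fintype.card R := by
      have := Set.ncard_le_ncard (Set.subset_univ (insert j S)) (Set.toFinite _)
      simpa [Set.ncard_univ] using this
    exact Nat.findGreatest_is_greatest (P := P) (n := Fintype.card R) (by omega) (by omega)
      ⟨insert j S, hstep, rfl⟩
  have hne : S ≠ Set.univ := fun hSu => h (hSu ▸ hS)
  obtain ⟨j₀, hj₀⟩ := Set.ne_univ_iff_exists_notMem S |>.mp hne
  set SF : Finset R := (Set.toFinite S).toFinset with hSF
  have hmem : ∀ k : R, k ∈ SF ↔ k ∈ S := fun k => Set.Finite.mem_toFinset _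
  have hstallF : Stalled M SF := by
    intro c j h1 h2 h3
    refine hstall c j h1 (fun hc => h2 ((hmem j).mpr hc)) ?_
    intro k hk1 hk2
    exact h3 k hk1 (fun hc => hk2 ((hmem k).mp hc))
  refine ⟨consA M SF, consA_mem hstallF, fun k => if k ∈ SF then 0 else 1, ?_, ?_⟩
  · intro h0
    have := congrFun h0 j₀
    rw [if_neg (fun hc => hj₀ ((hmem j₀).mp hc))] at this
    exact one_ne_zero this
  · funext c
    show ∑ k, (if k ∈ SF then (0:ℝ) else 1) * consA M SF k c = 0
    have heq : ∑ k, (if k ∈ SF then (0:ℝ) else 1) * consA M SF k c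
        = ∑ k ∈ Finset.univ.filter (fun k => k ∉ SF), consA M SF k c := by
      rw [Finset.sum_filter]
      apply Finset.sum_congr rfl
      intro k _
      by_cases hk : k ∈ SF <;> simp [hk]
    rw [heq, consA_colsum]

/-- **Corollary (graph-theoretic condition, nonzero diagonal).** If no diagonal entry of
`𝒜` is `0`, then `(𝒜, ℬ)` is strongly structurally controllable iff `G([𝒜bar ℬ])` is
colorable. -/
theorem ssc_iff_colorable_of_diag_ne_zero {n m : ℕ} (𝒜 : Matrix (Fin n) (Fin n) PSym)
    (ℬ : Matrix (Fin n) (Fin m) PSym) (hdiag : ∀ i, 𝒜 i i ≠ PSym.zero) :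
    StrStrControllable 𝒜 ℬ ↔
      PatternColorable (Matrix.fromCols (barPattern 𝒜) ℬ) := by
  set M : Matrix (Fin n) (Fin n ⊕ Fin m) PSym := Matrix.fromCols (barPattern 𝒜) ℬ with hM
  constructor
  · -- SSC → colorable
    intro hssc
    by_contra hcol
    obtain ⟨A', hA', z, hz, hzA⟩ := exists_null_of_not_colorable M hcol
    set N₁ : Matrix (Fin n) (Fin n) ℝ := fun i j => A' i (Sum.inl j) with hN1
    set N₂ : Matrix (Fin n) (Fin m) ℝ := fun i j => A' i (Sum.inr j) with hN2
    obtain ⟨lam, hlam⟩ := Infinite.exists_notMem_finset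
      (Finset.image (fun i => -N₁ i i) Finset.univ)
    have hlam' : ∀ i : Fin n, N₁ i i + lam ≠ 0 := by
      intro i hcon
      exact hlam (Finset.mem_image.mpr ⟨i, Finset.mem_univ i, by linarith⟩)
    set A : Matrix (Fin n) (Fin n) ℝ := fun i j => N₁ i j + if i = j then lam else 0 with hAdef
    have hA'entry : ∀ (i : Fin n) (j : Fin n),
        (barPattern 𝒜 i j = PSym.zero → A' i (Sum.inl j) = 0) ∧
        (barPattern 𝒜 i j = PSym.star → A' i (Sum.inl j) ≠ 0) := by
      intro i j
      have := hA' i (Sum.inl j)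
      simpa [hM, Matrix.fromCols] using this
    have hA : A ∈ PatternClass 𝒜 := by
      intro i j
      by_cases hij : i = j
      · subst hij
        refine ⟨fun h0 => absurd h0 (hdiag i), fun _ => ?_⟩
        have : A i i = N₁ i i + lam := by simp [hAdef]
        rw [this]; exact hlam' i
      · have hbar : barPattern 𝒜 i j = 𝒜 i j := by simp [barPattern, hij]
        have hAij : A i j = N₁ i j := by simp [hAdef, hij]
        rw [hAij]
        exact ⟨fun h0 => (hA'entry i j).1 (hbar ▸ h0),
               fun hs => (hA'entry i j).2 (hbar ▸ hs)⟩
    have hB : N₂ ∈ PatternClass ℬ := by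
      intro i j
      have := hA' i (Sum.inr j)
      simpa [hM, Matrix.fromCols] using this
    have hctrl := hssc A hA N₂ hB (lam : ℂ)
    have hHeq : Matrix.fromCols (A.map (Complex.ofReal) -
          (lam : ℂ) • (1 : Matrix (Fin n) (Fin n) ℂ)) (N₂.map (Complex.ofReal))
        = A'.map (Complex.ofReal) := by
      ext i c
      cases c with
      | inl j =>
        simp only [Matrix.fromCols_apply_inl, Matrix.sub_apply, Matrix.map_apply,
          Matrix.smul_apply, Matrix.one_apply, smul_eq_mul]
        by_cases hij : i = j
        · subst hij
          simp [hAdef, hN1]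
        · simp [hAdef, hij, hN1]
      | inr j => simp [Matrix.fromCols_apply_inr]; rfl
    rw [hHeq] at hctrl
    have hwnull : (A'.map (Complex.ofReal)).vecMul (fun i => ((z i : ℝ) : ℂ)) = 0 := by
      funext c
      have hzc : Matrix.vecMul z A' c = 0 := congrFun hzA c
      show ∑ i, ((z i : ℝ) : ℂ) * ((A' i c : ℝ) : ℂ) = 0
      have : ∑ i, ((z i : ℝ) : ℂ) * ((A' i c : ℝ) : ℂ)
          = ((∑ i, z i * A' i c : ℝ) : ℂ) := by push_cast; ring
      rw [this]
      have : (∑ i, z i * A' i c) = 0 := hzc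
      rw [this, Complex.ofReal_zero]
    have hwne : (fun i => ((z i : ℝ) : ℂ)) ≠ 0 := by
      intro h0
      apply hz
      funext i
      have := congrFun h0 i
      simpa using this
    have := rank_ne_card_of_leftvec (A'.map (Complex.ofReal)) _ hwne hwnull
    rw [Fintype.card_fin] at this
    exact this hctrl
  · -- colorable → SSC
    intro hcol A hA B hB l
    have hcompat : PCompat M (Matrix.fromCols (A.map (Complex.ofReal) -
        l • (1 : Matrix (Fin n) (Fin n) ℂ)) (B.map (Complex.ofReal))) := by
      intro i c
      cases c with
      | inl j =>
        simp only [hM, Matrix.fromCols_apply_inl, Matrix.sub_apply, Matrix.map_apply,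
          Matrix.smul_apply, Matrix.one_apply, smul_eq_mul]
        by_cases hij : i = j
        · subst hij
          have : barPattern 𝒜 i i = PSym.arb := by
            simp [barPattern, hdiag i]
          rw [this]
          exact ⟨fun h => PSym.noConfusion h, fun h => PSym.noConfusion h⟩
        · have hbar : barPattern 𝒜 i j = 𝒜 i j := by simp [barPattern, hij]
          rw [hbar, if_neg hij]
          constructor
          · intro h0
            rw [(hA i j).1 h0]
            simp
          · intro hs
            have := (hA i j).2 hs
            simp only [mul_zero, sub_zero]
            exact_mod_cast this
      | inr j =>
        simp only [hM, Matrix.fromCols_apply_inr, Matrix.map_apply]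
        exact ⟨fun h0 => by rw [(hB i j).1 h0]; simp,
               fun hs => by exact_mod_cast (hB i j).2 hs⟩
    refine (rank_eq_card_of_leftker _ ?_).trans (Fintype.card_fin n)
    intro w hw
    funext i
    exact colorstep_null hcompat hcol w hw i (Set.mem_univ i)
end

section
/- Let A be an n×n pattern matrix and B an n×m pattern matrix. Then the structured system (A,B) is strongly structurally stabilizable (i.e., the pair (A,B) is stabilizable for all A ∈ P(A) and B ∈ P(B)) if and only if (A,B) is strongly structurally controllable. -/
open Matrix

lemma rank_fromColumns_neg_left {n m k : ℕ} (X : Matrix (Fin n) (Fin k) ℂ)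
    (B : Matrix (Fin n) (Fin m) ℂ) :
    (Matrix.fromCols (-X) B).rank = (Matrix.fromCols X B).rank := by
  have h : Matrix.fromCols (-X) B =
      (Matrix.fromCols X B) * Matrix.fromBlocks (-1 : Matrix (Fin k) (Fin k) ℂ) 0 0
        (1 : Matrix (Fin m) (Fin m) ℂ) := by
    rw [Matrix.fromCols_mul_fromBlocks]
    simp
  rw [h]
  apply Matrix.rank_mul_eq_left_of_isUnit_det
  rw [Matrix.det_fromBlocks_zero₂₁]
  simp [Matrix.det_neg]

/-- **Theorem (stabilizability = controllability).** The structured system `(𝒜, ℬ)` is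
strongly structurally stabilizable iff it is strongly structurally controllable. -/
theorem ss_stabilizable_iff_ss_controllable {n m : ℕ} (𝒜 : Matrix (Fin n) (Fin n) PSym)
    (ℬ : Matrix (Fin n) (Fin m) PSym) :
    StrStrStabilizable 𝒜 ℬ ↔ StrStrControllable 𝒜 ℬ := by
  constructor
  · intro h A hA B hB l
    by_cases hl : 0 ≤ l.re
    · exact h A hA B hB l hl
    · have hA' : -A ∈ PatternClass 𝒜 := by
        intro i j
        obtain ⟨h0, hs⟩ := hA i j
        exact ⟨fun hz => by simp [h0 hz], fun hz => by simpa using hs hz⟩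
      have key := h (-A) hA' B hB (-l) (by simp; linarith)
      have hm : ((-A).map Complex.ofReal) - (-l) • (1 : Matrix (Fin n) (Fin n) ℂ)
          = -((A.map Complex.ofReal) - l • 1) := by
        ext i j
        simp [Matrix.map_apply]
        ring
      rw [hm, rank_fromColumns_neg_left] at key
      exact key
  · intro h A hA B hB l _
    exact h A hA B hB l
end

section
/- Let M be a p×q pattern matrix with p ≤ q. Then M has full row rank (i.e., every real matrix in P(M) has full row rank) if and only if M is of Form III, meaning there exist permutation matrices P1 and P2 such that in P1 M P2 the last p columns form a lower-triangular pattern whose diagonal entries are all ∗ and whose entries strictly above the diagonal are all 0 (entries in the first q−p columns and below the diagonal of the last p columns are arbitrary symbols from {0, ∗, ?}). -/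
open Matrix

/-- A `p × q` pattern matrix (`p ≤ q`) is of Form III if by permutations of rows and
columns it can be brought into the shape `[N T]` where the `p × p` block `T` has `∗` on
the diagonal and `0` strictly above the diagonal. -/
def FormIII {p q : ℕ} (hpq : p ≤ q) (M : Matrix (Fin p) (Fin q) PSym) : Prop :=
  ∃ (σ : Equiv.Perm (Fin p)) (τ : Equiv.Perm (Fin q)),
    (∀ i : Fin p, M (σ i) (τ ⟨q - p + i, by have := i.isLt; omega⟩) = PSym.star) ∧
    (∀ i j : Fin p, i < j →
      M (σ i) (τ ⟨q - p + j, by have := j.isLt; omega⟩) = PSym.zero)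

private lemma rank_eq_card_iff_rows_li {m n : Type*} [Fintype m] [Fintype n]
    (A : Matrix m n ℝ) :
    A.rank = Fintype.card m ↔ LinearIndependent ℝ (fun i => A i) := by
  constructor
  · intro h
    rw [linearIndependent_iff_card_eq_finrank_span, Set.finrank]
    rw [Matrix.rank_eq_finrank_span_row] at h
    exact h.symm
  · intro h
    exact h.rank_matrix

private lemma exists_good_column {R C : Type*} [Fintype R] [Fintype C]
    [DecidableEq R] [DecidableEq C] [Nonempty R]
    (M : Matrix R C PSym) (hM : PatternFullRowRank M) :
    ∃ (r0 : R) (c0 : C), M r0 c0 = PSym.star ∧ ∀ r, r ≠ r0 → M r c0 = PSym.zero := by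
  classical
  by_contra hcon
  push_neg at hcon
  have hcol : ∀ c : C, ∃ v : R → ℝ,
      (∀ r, M r c = PSym.zero → v r = 0) ∧ (∀ r, M r c = PSym.star → v r ≠ 0) ∧
      ∑ r, v r = 0 := by
    intro c
    set St : Finset R := Finset.univ.filter (fun r => M r c = PSym.star) with hSt
    rcases St.eq_empty_or_nonempty with hemp | ⟨r0, hr0⟩
    · refine ⟨0, fun _ _ => rfl, fun r hr => ?_, by simp⟩
      exact absurd (Finset.mem_filter.mpr ⟨Finset.mem_univ r, hr⟩)
        (by rw [← hSt, hemp]; simp)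
    · have hr0star : M r0 c = PSym.star := by
        simpa [hSt] using hr0
      rcases lt_or_ge St.card 2 with h1 | h2
      · -- card = 1
        have hcard : St.card = 1 := le_antisymm (by omega) (Finset.card_pos.mpr ⟨r0, hr0⟩)
        have hSt1 : St = {r0} := Finset.eq_singleton_iff_unique_mem.mpr
          ⟨hr0, fun x hx => by
            have := Finset.card_le_one.mp (le_of_eq hcard) x hx r0 hr0
            exact this⟩
        obtain ⟨r1, hr1ne, hr1⟩ := hcon r0 c hr0star
        have hr1star : M r1 c ≠ PSym.star := by
          intro h
          exact hr1ne (by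
            have : r1 ∈ St := Finset.mem_filter.mpr ⟨Finset.mem_univ _, h⟩
            rw [hSt1] at this; simpa using this)
        refine ⟨fun r => (if r = r0 then (1:ℝ) else 0) + (if r = r1 then (-1:ℝ) else 0),
          ?_, ?_, ?_⟩
        · intro r hr
          have h1 : r ≠ r0 := by rintro rfl; rw [hr0star] at hr; exact PSym.noConfusion hr
          have h2 : r ≠ r1 := by rintro rfl; exact hr1 hr
          simp [h1, h2]
        · intro r hr
          have : r ∈ St := Finset.mem_filter.mpr ⟨Finset.mem_univ _, hr⟩
          rw [hSt1, Finset.mem_singleton] at this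
          subst this
          have hne : r ≠ r1 := fun h => hr1star (h ▸ hr)
          simp [hne]
        · rw [Finset.sum_add_distrib]
          simp
      · -- card ≥ 2
        refine ⟨fun r => if M r c = PSym.star then (if r = r0 then 1 - (St.card : ℝ) else 1)
          else 0, ?_, ?_, ?_⟩
        · intro r hr
          dsimp only
          rw [if_neg]; rw [hr]; exact fun h => PSym.noConfusion h
        · intro r hr
          dsimp only
          rw [if_pos hr]
          by_cases h : r = r0
          · rw [if_pos h]
            have h2' : (2:ℝ) ≤ (St.card : ℝ) := by exact_mod_cast h2
            intro hc; linarith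
          · rw [if_neg h]; exact one_ne_zero
        · rw [← Finset.sum_filter, ← hSt, ← Finset.add_sum_erase _ _ hr0, if_pos rfl]
          have : ∑ r ∈ St.erase r0, (if r = r0 then 1 - (St.card:ℝ) else 1)
              = (St.card : ℝ) - 1 := by
            rw [Finset.sum_congr rfl (fun x hx => if_neg (Finset.ne_of_mem_erase hx))]
            rw [Finset.sum_const, Finset.card_erase_of_mem hr0]
            have : 1 ≤ St.card := by omega
            rw [nsmul_eq_mul, mul_one, Nat.cast_sub this, Nat.cast_one]
          rw [this]; ring
  choose v hv0 hvstar hvsum using hcol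
  have hmem : (fun r c => v c r) ∈ PatternClass M := fun r c => ⟨hv0 c r, hvstar c r⟩
  have hrank := hM _ hmem
  replace hrank := (rank_eq_card_iff_rows_li _).mp hrank
  have hzero : ∑ i : R, (1:ℝ) • (fun (c : C) => v c i) = 0 := by
    funext c
    rw [Finset.sum_apply]
    simpa using hvsum c
  exact one_ne_zero
    (Fintype.linearIndependent_iff.mp hrank (fun _ => 1) hzero (Classical.arbitrary R))

private lemma submatrix_fullRowRank {R C : Type*} [Fintype R] [Fintype C]
    [DecidableEq R] [DecidableEq C]
    (M : Matrix R C PSym) (hM : PatternFullRowRank M)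
    (r0 : R) (c0 : C) (hstar : M r0 c0 = PSym.star)
    (hzero : ∀ r, r ≠ r0 → M r c0 = PSym.zero) :
    PatternFullRowRank (M.submatrix (Subtype.val : {r : R // r ≠ r0} → R)
      (Subtype.val : {c : C // c ≠ c0} → C)) := by
  classical
  intro A' hA'
  rw [rank_eq_card_iff_rows_li]
  set A : Matrix R C ℝ := fun i j =>
    if hi : i = r0 then (if M i j = PSym.star then 1 else 0)
    else if hj : j = c0 then 0 else A' ⟨i, hi⟩ ⟨j, hj⟩ with hAdef
  have hmem : A ∈ PatternClass M := by
    intro i j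
    constructor
    · intro hz
      by_cases hi : i = r0
      · subst hi
        simp only [hAdef, dif_pos rfl]
        rw [if_neg]; rw [hz]; exact fun h => PSym.noConfusion h
      · by_cases hj : j = c0
        · simp only [hAdef, dif_neg hi, dif_pos hj]
        · simp only [hAdef, dif_neg hi, dif_neg hj]
          exact (hA' ⟨i, hi⟩ ⟨j, hj⟩).1 hz
    · intro hs
      by_cases hi : i = r0
      · subst hi
        simp only [hAdef, dif_pos rfl, if_pos hs]
        exact one_ne_zero
      · have hj : j ≠ c0 := by
          rintro rfl
          rw [hzero i hi] at hs
          exact PSym.noConfusion hs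
        simp only [hAdef, dif_neg hi, dif_neg hj]
        exact (hA' ⟨i, hi⟩ ⟨j, hj⟩).2 hs
  have hrank := hM A hmem
  rw [rank_eq_card_iff_rows_li] at hrank
  rw [Fintype.linearIndependent_iff] at hrank ⊢
  intro g hg i
  set G : R → ℝ := fun i => if h : i = r0 then 0 else g ⟨i, h⟩ with hG
  have hcompl : ∀ (f : R → ℝ), ∑ x ∈ ({r0}ᶜ : Finset R), f x = ∑ x : {r : R // r ≠ r0}, f x := by
    intro f
    exact Finset.sum_subtype _ (fun x => by simp) f
  have hApt : ∀ (x : {r : R // r ≠ r0}) (y : {c : C // c ≠ c0}), A x.1 y.1 = A' x y := by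
    intro x y
    simp [hAdef, x.2, y.2]
  have hGpt : ∀ x : {r : R // r ≠ r0}, G x.1 = g x := by
    intro x
    simp [hG, x.2]
  have key : ∑ i, G i • A i = 0 := by
    funext j
    rw [Finset.sum_apply]
    simp only [Pi.zero_apply, Pi.smul_apply, smul_eq_mul]
    rw [Fintype.sum_eq_add_sum_compl r0, hcompl (fun x => G x * A x j)]
    have hGr0 : G r0 = 0 := by simp [hG]
    rw [hGr0, zero_mul, zero_add]
    by_cases hj : j = c0
    · subst hj
      apply Finset.sum_eq_zero
      intro x _
      have hx : (x : R) ≠ r0 := x.2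
      simp [hAdef, hx]
    · have hthis := congrFun hg ⟨j, hj⟩
      rw [Finset.sum_apply] at hthis
      simp only [Pi.zero_apply, Pi.smul_apply, smul_eq_mul] at hthis
      rw [Finset.sum_congr rfl fun (x : {r : R // r ≠ r0}) _ =>
        show G x.1 * A x.1 j = g x * A' x ⟨j, hj⟩ by rw [hGpt x, hApt x ⟨j, hj⟩]]
      exact hthis
  have hG0 := hrank G key i.1
  rwa [hGpt i] at hG0

private lemma exists_chain (n : ℕ) :
    ∀ (R C : Type) [Fintype R] [DecidableEq R] [Fintype C] [DecidableEq C]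
      (M : Matrix R C PSym), Fintype.card R = n → Fintype.card R ≤ Fintype.card C →
      PatternFullRowRank M →
      ∃ (r : Fin n → R) (c : Fin n → C), Function.Bijective r ∧ Function.Injective c ∧
        (∀ j, M (r j) (c j) = PSym.star) ∧
        (∀ i j : Fin n, i < j → M (r i) (c j) = PSym.zero) := by
  induction n with
  | zero =>
    intro R C _ _ _ _ M hcard _ _
    have hR : IsEmpty R := Fintype.card_eq_zero_iff.mp hcard
    exact ⟨Fin.elim0, Fin.elim0, ⟨fun a => a.elim0, fun a => (hR.false a).elim⟩,
      fun a => a.elim0, fun a => a.elim0, fun a => a.elim0⟩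
  | succ m ih =>
    intro R C _ _ _ _ M hcard hle hM
    have hne : Nonempty R := Fintype.card_pos_iff.mp (by omega)
    obtain ⟨r0, c0, hstar, hzero⟩ := exists_good_column M hM
    have hsub := submatrix_fullRowRank M hM r0 c0 hstar hzero
    have hcardR' : Fintype.card {r : R // r ≠ r0} = m := by
      have h := Fintype.card_subtype_compl (fun r : R => r = r0)
      rw [Fintype.card_subtype_eq] at h
      have he : Fintype.card {r : R // r ≠ r0} = Fintype.card {r : R // ¬ (r = r0)} :=
        Fintype.card_congr (Equiv.refl _)
      omega
    have hcardC' : Fintype.card {c : C // c ≠ c0} = Fintype.card C - 1 := by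
      have h := Fintype.card_subtype_compl (fun c : C => c = c0)
      rw [Fintype.card_subtype_eq] at h
      have he : Fintype.card {c : C // c ≠ c0} = Fintype.card {c : C // ¬ (c = c0)} :=
        Fintype.card_congr (Equiv.refl _)
      omega
    obtain ⟨r', c', hbij, hinj, hstar', hzero'⟩ :=
      ih {r : R // r ≠ r0} {c : C // c ≠ c0} (M.submatrix Subtype.val Subtype.val)
        hcardR' (by omega) hsub
    refine ⟨fun j => if h : (j : ℕ) < m then (r' ⟨j, h⟩).1 else r0,
      fun j => if h : (j : ℕ) < m then (c' ⟨j, h⟩).1 else c0, ?_, ?_, ?_, ?_⟩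
    · rw [Fintype.bijective_iff_injective_and_card]
      refine ⟨?_, by simp [hcard]⟩
      intro a b hab
      dsimp only at hab
      by_cases ha : (a : ℕ) < m
      · by_cases hb : (b : ℕ) < m
        · rw [dif_pos ha, dif_pos hb] at hab
          have h1 : (⟨(a : ℕ), ha⟩ : Fin m) = ⟨(b : ℕ), hb⟩ :=
            hbij.1 (Subtype.coe_injective hab)
          have h2 : (a : ℕ) = (b : ℕ) := by injection h1
          exact Fin.ext h2
        · rw [dif_pos ha, dif_neg hb] at hab
          exact absurd hab (r' ⟨(a : ℕ), ha⟩).2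
      · by_cases hb : (b : ℕ) < m
        · rw [dif_neg ha, dif_pos hb] at hab
          exact absurd hab.symm (r' ⟨(b : ℕ), hb⟩).2
        · have := a.isLt
          have := b.isLt
          exact Fin.ext (by omega)
    · intro a b hab
      dsimp only at hab
      by_cases ha : (a : ℕ) < m
      · by_cases hb : (b : ℕ) < m
        · rw [dif_pos ha, dif_pos hb] at hab
          have h1 : (⟨(a : ℕ), ha⟩ : Fin m) = ⟨(b : ℕ), hb⟩ :=
            hinj (Subtype.coe_injective hab)
          have h2 : (a : ℕ) = (b : ℕ) := by injection h1
          exact Fin.ext h2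
        · rw [dif_pos ha, dif_neg hb] at hab
          exact absurd hab (c' ⟨(a : ℕ), ha⟩).2
      · by_cases hb : (b : ℕ) < m
        · rw [dif_neg ha, dif_pos hb] at hab
          exact absurd hab.symm (c' ⟨(b : ℕ), hb⟩).2
        · have := a.isLt
          have := b.isLt
          exact Fin.ext (by omega)
    · intro j
      dsimp only
      by_cases h : (j : ℕ) < m
      · rw [dif_pos h, dif_pos h]
        exact hstar' ⟨(j : ℕ), h⟩
      · rw [dif_neg h, dif_neg h]
        exact hstar
    · intro i j hij
      dsimp only
      have hij' : (i : ℕ) < (j : ℕ) := hij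
      by_cases hj : (j : ℕ) < m
      · have hi : (i : ℕ) < m := by omega
        rw [dif_pos hi, dif_pos hj]
        exact hzero' ⟨(i : ℕ), hi⟩ ⟨(j : ℕ), hj⟩ (by exact hij')
      · have hi : (i : ℕ) < m := by have := j.isLt; omega
        rw [dif_pos hi, dif_neg hj]
        exact hzero _ (r' ⟨(i : ℕ), hi⟩).2

/-- **Lemma 1.** A `p × q` pattern matrix with `p ≤ q` has full row rank iff it is of
Form III. -/
theorem full_row_rank_iff_formIII {p q : ℕ} (hpq : p ≤ q)
    (ℳ : Matrix (Fin p) (Fin q) PSym) :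
    PatternFullRowRank ℳ ↔ FormIII hpq ℳ := by
  constructor
  · intro h
    obtain ⟨r, c, hbij, hinj, hstar, hzero⟩ :=
      exists_chain p (Fin p) (Fin q) ℳ (Fintype.card_fin p) (by simpa using hpq) h
    classical
    let P : Fin q → Prop := fun x => q - p ≤ (x : ℕ)
    let e1 : {x : Fin q // P x} ≃ Fin p :=
      { toFun := fun x => ⟨(x : Fin q).val - (q - p), by
          have h1 := (x : Fin q).isLt; have h2 := x.2; omega⟩
        invFun := fun j => ⟨⟨q - p + (j : ℕ), by have := j.isLt; omega⟩, by
          show q - p ≤ q - p + (j : ℕ); omega⟩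
        left_inv := fun x => by
          have h2 := x.2
          apply Subtype.ext
          apply Fin.ext
          show q - p + ((x : Fin q).val - (q - p)) = (x : Fin q).val
          have : q - p ≤ (x : Fin q).val := h2
          omega
        right_inv := fun j => by
          apply Fin.ext
          show q - p + (j : ℕ) - (q - p) = (j : ℕ)
          omega }
    let e2 : Fin p ≃ {x : Fin q // x ∈ Set.range c} := Equiv.ofInjective c hinj
    letI hd1 : DecidablePred P := fun x => Nat.decLe _ _
    letI hd2 : DecidablePred (· ∈ Set.range c) := fun x => Classical.dec _
    let τ : Equiv.Perm (Fin q) := Equiv.extendSubtype (e1.trans e2)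
    have hτ : ∀ (j : Fin p) (hh : q - p + (j : ℕ) < q),
        τ ⟨q - p + (j : ℕ), hh⟩ = c j := by
      intro j hh
      have hP : P ⟨q - p + (j : ℕ), hh⟩ := by
        show q - p ≤ q - p + (j : ℕ); omega
      rw [Equiv.extendSubtype_apply_of_mem _ _ hP]
      show ((e2 (e1 ⟨⟨q - p + (j : ℕ), hh⟩, hP⟩)) : Fin q) = c j
      have he1 : e1 ⟨⟨q - p + (j : ℕ), hh⟩, hP⟩ = j := by
        apply Fin.ext
        show q - p + (j : ℕ) - (q - p) = (j : ℕ)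
        omega
      rw [he1]
      simp [e2]
    exact ⟨Equiv.ofBijective r hbij, τ,
      fun i => by rw [hτ]; exact hstar i,
      fun i j hij => by rw [hτ]; exact hzero i j hij⟩
  · rintro ⟨σ, τ, hdiag, hupper⟩
    intro A hA
    rw [rank_eq_card_iff_rows_li]
    classical
    set cfun : Fin p → Fin q := fun j => τ ⟨q - p + (j : ℕ), by have := j.isLt; omega⟩
      with hcfun
    set T : Matrix (Fin p) (Fin p) ℝ := fun i j => A (σ i) (cfun j) with hT
    have hTlow : T.BlockTriangular OrderDual.toDual := by
      intro i j hij
      have hij' : i < j := hij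
      exact (hA (σ i) (cfun j)).1 (hupper i j hij')
    have hdet : T.det ≠ 0 := by
      rw [Matrix.det_of_lowerTriangular T hTlow]
      exact Finset.prod_ne_zero_iff.mpr fun i _ => (hA (σ i) (cfun i)).2 (hdiag i)
    have hTu : IsUnit T := (Matrix.isUnit_iff_isUnit_det T).mpr (isUnit_iff_ne_zero.mpr hdet)
    have hTli : LinearIndependent ℝ (fun i => T i) :=
      Matrix.linearIndependent_rows_iff_isUnit.mpr hTu
    have hli : LinearIndependent ℝ (fun i => A (σ i)) := by
      have heq : (fun i => T i) = (LinearMap.funLeft ℝ ℝ cfun) ∘ (fun i => A (σ i)) := rfl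
      rw [heq] at hTli
      exact hTli.of_comp _
    have : LinearIndependent ℝ ((fun i => A i) ∘ σ) := hli
    exact (linearIndependent_equiv σ).mp this
end

section
/- Consider the 3×3 pattern matrix A with rows (∗, 0, ∗), (0, 0, ∗), (?, ∗, ∗) and the 3×2 pattern matrix B with rows (∗, 0), (0, ∗), (?, 0). Then the structured system (A,B) is strongly structurally controllable, i.e., for every real matrix A ∈ P(A) and B ∈ P(B) the pair (A,B) is controllable. -/
open Matrix

/-- The structured system of the electrical circuit example is strongly structurally
controllable. -/
theorem circuit_example_controllable :
    StrStrControllable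
      !![PSym.star, PSym.zero, PSym.star;
         PSym.zero, PSym.zero, PSym.star;
         PSym.arb,  PSym.star, PSym.star]
      !![PSym.star, PSym.zero;
         PSym.zero, PSym.star;
         PSym.arb,  PSym.zero] := by
  intro A hA B hB l
  have hc : A 0 2 ≠ 0 := (hA 0 2).2 rfl
  have h01 : A 0 1 = 0 := (hA 0 1).1 rfl
  have h11 : A 1 1 = 0 := (hA 1 1).1 rfl
  have hh : A 2 1 ≠ 0 := (hA 2 1).2 rfl
  have hb1 : B 0 0 ≠ 0 := (hB 0 0).2 rfl
  have hb01 : B 0 1 = 0 := (hB 0 1).1 rfl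
  have hb2 : B 1 1 ≠ 0 := (hB 1 1).2 rfl
  have hb21 : B 2 1 = 0 := (hB 2 1).1 rfl
  set M := Matrix.fromCols (A.map (Complex.ofReal) - l • (1 : Matrix (Fin 3) (Fin 3) ℂ))
      (B.map (Complex.ofReal)) with hM
  have hli : LinearIndependent ℂ M.row := by
    rw [Fintype.linearIndependent_iff]
    change ∀ g : Fin 3 → ℂ, ∑ i, g i • M i = 0 → ∀ i, g i = 0
    intro g hg
    have e1 : (∑ i : Fin 3, g i • M i) (Sum.inr 1) = 0 := by rw [hg]; rfl
    have e2 : (∑ i : Fin 3, g i • M i) (Sum.inl 1) = 0 := by rw [hg]; rfl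
    have e3 : (∑ i : Fin 3, g i • M i) (Sum.inl 2) = 0 := by rw [hg]; rfl
    have e0 : (∑ i : Fin 3, g i • M i) (Sum.inl 0) = 0 := by rw [hg]; rfl
    simp only [Fin.sum_univ_three, Finset.sum_apply, Pi.add_apply, Pi.smul_apply,
      hM, Matrix.fromCols_apply_inr, Matrix.fromCols_apply_inl, Matrix.sub_apply,
      Matrix.map_apply, Matrix.smul_apply, Matrix.one_apply, smul_eq_mul,
      hb01, hb21, h01, h11] at e1 e2 e3 e0
    norm_num at e1 e2 e3 e0
    have hg1 : g 1 = 0 := by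
      rcases e1 with h | h
      · exact h
      · exact absurd h hb2
    have hg2 : g 2 = 0 := by
      rw [hg1] at e2
      simp at e2
      rcases e2 with h | h
      · exact h
      · exact absurd (by exact_mod_cast h) hh
    have hg0 : g 0 = 0 := by
      rw [hg1, hg2] at e3
      simp at e3
      rcases e3 with h | h
      · exact h
      · exact absurd (by exact_mod_cast h) hc
    intro i
    fin_cases i <;> assumption
  have := hli.rank_matrix
  exact this.trans (Fintype.card_fin 3)
end

section
/- Let A be an n×n pattern matrix containing no ? entries (every entry is 0 or ∗), let W_L = {w_1,...,w_m} ⊆ {1,...,n} be a set of m distinct leader nodes, and let B be the n×m pattern matrix with B_ij = ∗ if i = w_j and B_ij = 0 otherwise. Then the graph G([A B]) is colorable if and only if W_L is a loopy zero forcing set for the directed graph G(A). -/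
open Matrix

/-- Sets of black nodes obtainable from the initial black set `S₀` by the loopy color
change rule: a node `i` of any color with exactly one white out-neighbor `j`
(`F i j` meaning there is an edge from `i` to `j`) colors `j` black. -/
inductive LoopyZFStep {V : Type*} (F : V → V → Prop) (S₀ : Set V) : Set V → Prop
  | init : LoopyZFStep F S₀ S₀
  | step (S : Set V) (i j : V)
      (hS : LoopyZFStep F S₀ S)
      (hedge : F i j)
      (hwhite : j ∉ S)
      (huniq : ∀ k, F i k → k ∉ S → k = j) :
      LoopyZFStep F S₀ (insert j S)

/-- `S₀` is a loopy zero forcing set for the directed graph with edge relation `F` if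
all nodes can be colored black by the loopy color change rule. -/
def LoopyZeroForcingSet {V : Type*} (F : V → V → Prop) (S₀ : Set V) : Prop :=
  LoopyZFStep F S₀ Set.univ

/-- For an `n × n` pattern matrix `𝒜` without `?` entries and a leader set
`W_L = {w 1, ..., w m}` with corresponding input pattern `ℬ`, the graph `G([𝒜 ℬ])` is
colorable iff `W_L` is a loopy zero forcing set for `G(𝒜)` (whose edge `(j, i)` exists
iff `𝒜 i j = ∗`). -/
theorem colorable_iff_loopy_zero_forcing {n m : ℕ}
    (𝒜 : Matrix (Fin n) (Fin n) PSym) (h𝒜 : ∀ i j, 𝒜 i j ≠ PSym.arb)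
    (w : Fin m → Fin n) (hw : Function.Injective w)
    (ℬ : Matrix (Fin n) (Fin m) PSym)
    (hℬ : ∀ i j, ℬ i j = if i = w j then PSym.star else PSym.zero) :
    PatternColorable (Matrix.fromCols 𝒜 ℬ) ↔
      LoopyZeroForcingSet (fun a b => 𝒜 b a = PSym.star) (Set.range w) := by
  set M := Matrix.fromCols 𝒜 ℬ with hM
  constructor
  · intro h
    have key : ∀ S, ColorStep M S →
        LoopyZFStep (fun a b => 𝒜 b a = PSym.star) (Set.range w) (S ∪ Set.range w) := by
      intro S hS
      induction hS with
      | init => simpa using LoopyZFStep.init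
      | step S c j hS hstar hwhite huniq ih =>
        cases c with
        | inr j' =>
          have hj : j = w j' := by
            have h1 : ℬ j j' = PSym.star := by
              simpa [hM, Matrix.fromCols] using hstar
            rw [hℬ] at h1
            by_contra hne
            rw [if_neg hne] at h1
            exact PSym.noConfusion h1
          subst hj
          have heq : insert (w j') S ∪ Set.range w = S ∪ Set.range w := by
            rw [Set.insert_union]
            exact Set.insert_eq_self.mpr (Or.inr ⟨j', rfl⟩)
          rw [heq]; exact ih
        | inl c =>
          by_cases hj : j ∈ Set.range w
          · have heq : insert j S ∪ Set.range w = S ∪ Set.range w := by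
              rw [Set.insert_union]
              exact Set.insert_eq_self.mpr (Or.inr hj)
            rw [heq]; exact ih
          · rw [Set.insert_union]
            refine LoopyZFStep.step _ c j ih ?_ ?_ ?_
            · simpa [hM, Matrix.fromCols] using hstar
            · simp [hwhite, hj]
            · intro k hk hk'
              refine huniq k ?_ (fun hkS => hk' (Or.inl hkS))
              simp [hM, Matrix.fromCols, hk]
    have := key Set.univ h
    simpa [LoopyZeroForcingSet] using this
  · intro h
    have base : ∀ s : Finset (Fin m), ColorStep M (w '' ↑s) := by
      intro s
      induction s using Finset.induction with
      | empty => simpa using ColorStep.init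
      | @insert a s ha ih =>
        have heq : (w '' ↑(insert a s) : Set (Fin n)) = insert (w a) (w '' ↑s) := by
          rw [Finset.coe_insert, Set.image_insert_eq]
        rw [heq]
        refine ColorStep.step _ (Sum.inr a) (w a) ih ?_ ?_ ?_
        · simp [hM, Matrix.fromCols, hℬ]
        · rintro ⟨b, hb, he⟩
          exact ha (by rwa [hw he] at hb)
        · intro k hk _
          by_contra hne
          apply hk
          simp [hM, Matrix.fromCols, hℬ, hne]
    have key : ∀ S, LoopyZFStep (fun a b => 𝒜 b a = PSym.star) (Set.range w) S →
        ColorStep M S := by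
      intro S hS
      induction hS with
      | init =>
        have : (Set.range w) = w '' ↑(Finset.univ : Finset (Fin m)) := by
          simp [Set.image_univ]
        rw [this]; exact base _
      | step S i j hS hedge hwhite huniq ih =>
        refine ColorStep.step S (Sum.inl i) j ih ?_ hwhite ?_
        · simpa [hM, Matrix.fromCols] using hedge
        · intro k hk hkS
          refine huniq k ?_ hkS
          have hk' : 𝒜 k i ≠ PSym.zero := by
            simpa [hM, Matrix.fromCols] using hk
          cases hki : 𝒜 k i with
          | zero => exact absurd hki hk'
          | star => rfl
          | arb => exact absurd hki (h𝒜 k i)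
    exact key Set.univ h
end

section
/- Let A be an n×n pattern matrix all of whose diagonal entries are ? and none of whose off-diagonal entries is ? (off-diagonal entries are 0 or ∗), let W_L = {w_1,...,w_m} ⊆ {1,...,n} be a set of m distinct leader nodes, and let B be the n×m pattern matrix with B_ij = ∗ if i = w_j and B_ij = 0 otherwise. Let H be the directed graph on nodes {1,...,n} with edge (j,i) iff A_ij = ∗ (so H has no self-loops). Then the graph G([A B]) is colorable if and only if W_L is an ordinary zero forcing set for H. -/
open Matrix

/-- Sets of black nodes obtainable from the initial black set `S₀` by the ordinary color
change rule: a BLACK node `i` with exactly one white out-neighbor `j` colors `j`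
black. -/
inductive OrdZFStep {V : Type*} (F : V → V → Prop) (S₀ : Set V) : Set V → Prop
  | init : OrdZFStep F S₀ S₀
  | step (S : Set V) (i j : V)
      (hS : OrdZFStep F S₀ S)
      (hblack : i ∈ S)
      (hedge : F i j)
      (hwhite : j ∉ S)
      (huniq : ∀ k, F i k → k ∉ S → k = j) :
      OrdZFStep F S₀ (insert j S)

/-- `S₀` is an ordinary zero forcing set for the directed graph with edge relation `F`
if all nodes can be colored black by the ordinary color change rule. -/
def OrdinaryZeroForcingSet {V : Type*} (F : V → V → Prop) (S₀ : Set V) : Prop :=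
  OrdZFStep F S₀ Set.univ

/-- For an `n × n` pattern matrix `𝒜` whose diagonal entries are all `?` and whose
off-diagonal entries are never `?`, and a leader set `W_L = {w 1, ..., w m}` with
corresponding input pattern `ℬ`, the graph `G([𝒜 ℬ])` is colorable iff `W_L` is an
ordinary zero forcing set for the graph `H` on `{1,...,n}` with edge `(j, i)` iff
`𝒜 i j = ∗` (which has no self-loops). -/
theorem colorable_iff_ordinary_zero_forcing {n m : ℕ}
    (𝒜 : Matrix (Fin n) (Fin n) PSym)
    (hdiag : ∀ i, 𝒜 i i = PSym.arb)
    (hoff : ∀ i j, i ≠ j → 𝒜 i j ≠ PSym.arb)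
    (w : Fin m → Fin n) (hw : Function.Injective w)
    (ℬ : Matrix (Fin n) (Fin m) PSym)
    (hℬ : ∀ i j, ℬ i j = if i = w j then PSym.star else PSym.zero) :
    PatternColorable (Matrix.fromCols 𝒜 ℬ) ↔
      OrdinaryZeroForcingSet (fun a b => 𝒜 b a = PSym.star) (Set.range w) := by
  classical
  set M := Matrix.fromCols 𝒜 ℬ with hMdef
  set F : Fin n → Fin n → Prop := fun a b => 𝒜 b a = PSym.star with hFdef
  have hMl : ∀ k c, M k (Sum.inl c) = 𝒜 k c := fun k c => rfl
  have hMr : ∀ k c, M k (Sum.inr c) = ℬ k c := fun k c => rfl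
  constructor
  · intro h
    have hgen : ∀ S, ColorStep M S → OrdZFStep F (Set.range w) (S ∪ Set.range w) := by
      intro S hS
      induction hS with
      | init => rw [Set.empty_union]; exact OrdZFStep.init
      | step S c j hS hstar hwhite huniq ih =>
        by_cases hjr : j ∈ Set.range w
        · rw [Set.insert_union, Set.insert_eq_of_mem (Set.mem_union_right S hjr)]
          exact ih
        · cases c with
          | inr j' =>
            exfalso
            rw [hMr, hℬ] at hstar
            by_cases hje : j = w j'
            · exact hjr ⟨j', hje.symm⟩
            · rw [if_neg hje] at hstar; exact PSym.noConfusion hstar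
          | inl c' =>
            rw [Set.insert_union]
            rw [hMl] at hstar
            have hjc : j ≠ c' := by
              intro e; rw [e, hdiag] at hstar; exact PSym.noConfusion hstar
            have hc'S : c' ∈ S := by
              by_contra hc
              exact hjc ((huniq c' (by rw [hMl, hdiag]; intro hh; exact PSym.noConfusion hh) hc).symm)
            refine OrdZFStep.step _ c' j ih (Or.inl hc'S) hstar ?_ ?_
            · intro hj
              rcases hj with hj | hj
              · exact hwhite hj
              · exact hjr hj
            · intro k hFk hk
              refine huniq k ?_ ?_
              · rw [hMl, hFk]; intro hh; exact PSym.noConfusion hh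
              · intro hkS; exact hk (Or.inl hkS)
    have := hgen _ h
    rwa [Set.univ_union] at this
  · intro h
    have base : ∀ t : Finset (Fin m), ColorStep M (w '' ↑t) := by
      intro t
      refine Finset.induction_on t (by simpa using ColorStep.init (M := M)) ?_
      intro a t hat ih
      · have himg : (w '' ↑(insert a t) : Set (Fin n)) = insert (w a) (w '' ↑t) := by
          rw [Finset.coe_insert, Set.image_insert_eq]
        rw [himg]
        by_cases hmem : w a ∈ w '' (↑t : Set (Fin m))
        · rw [Set.insert_eq_of_mem hmem]; exact ih
        · refine ColorStep.step _ (Sum.inr a) (w a) ih ?_ hmem ?_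
          · rw [hMr, hℬ, if_pos rfl]
          · intro k hk _
            by_contra hne
            exact hk (by rw [hMr, hℬ, if_neg hne])
    have hrange : ColorStep M (Set.range w) := by
      have := base Finset.univ
      simpa using this
    have hgen : ∀ S, OrdZFStep F (Set.range w) S → ColorStep M S := by
      intro S hS
      induction hS with
      | init => exact hrange
      | step S i j hS hblack hedge hwhite huniq ih =>
        refine ColorStep.step S (Sum.inl i) j ih hedge hwhite ?_
        intro k hk hkS
        by_cases hki : k = i
        · exact absurd (hki ▸ hblack) hkS
        · rw [hMl] at hk
          have : 𝒜 k i = PSym.star := by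
            cases hs : 𝒜 k i with
            | zero => exact absurd hs hk
            | star => rfl
            | arb => exact absurd hs (hoff k i hki)
          exact huniq k this hkS
    exact hgen _ h
end

section
/- Let M be a p×q pattern matrix with p ≤ q, and suppose that no column of M has exactly one ∗ entry with all other entries equal to 0 (i.e., every column either has all entries 0, or has exactly one ? entry and all other entries 0, or has at least two entries in {∗, ?}). Then there exists a real matrix M ∈ P(M) all of whose column sums are zero, i.e., 𝟙^T M = 0 where 𝟙 is the all-ones vector in ℝ^p; consequently, if p ≥ 1, this M does not have full row rank. -/
open Matrix

/-- If no column of `ℳ` has exactly one `∗` entry with all other entries `0`, then some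
member of `P(ℳ)` has all column sums zero; consequently (if `p ≥ 1`) it does not have
full row rank. -/
theorem exists_member_with_zero_column_sums {p q : ℕ} (hpq : p ≤ q)
    (ℳ : Matrix (Fin p) (Fin q) PSym)
    (h : ∀ j : Fin q,
      ¬ ∃ i : Fin p, ℳ i j = PSym.star ∧ ∀ k : Fin p, k ≠ i → ℳ k j = PSym.zero) :
    ∃ M ∈ PatternClass ℳ,
      Matrix.vecMul (fun _ => (1 : ℝ)) M = 0 ∧ (1 ≤ p → M.rank ≠ p) := by
  classical
  -- the set of non-`0` positions in column `j`
  set T : Fin q → Finset (Fin p) :=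
    fun j => Finset.univ.filter (fun i => ℳ i j ≠ PSym.zero) with hT
  -- construct the matrix
  set M : Matrix (Fin p) (Fin q) ℝ := fun i j =>
    if ℳ i j = PSym.zero then 0
    else if hst : ∃ i', ℳ i' j = PSym.star then
      (if i = hst.choose then 1 - ((T j).card : ℝ) else 1)
    else 0 with hM
  -- key cardinality fact: if column `j` has a star, then `(T j).card ≥ 2`
  have hcard : ∀ j (hst : ∃ i', ℳ i' j = PSym.star), 2 ≤ (T j).card := by
    intro j hst
    have hi0 : ℳ hst.choose j = PSym.star := hst.choose_spec
    have h2 : ∃ k, k ≠ hst.choose ∧ ℳ k j ≠ PSym.zero := by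
      by_contra hc
      push_neg at hc
      exact h j ⟨hst.choose, hi0, fun k hk => hc k hk⟩
    obtain ⟨k, hk, hkz⟩ := h2
    have hsub : ({hst.choose, k} : Finset (Fin p)) ⊆ T j := by
      intro x hx
      simp only [Finset.mem_insert, Finset.mem_singleton] at hx
      simp only [hT, Finset.mem_filter, Finset.mem_univ, true_and]
      rcases hx with rfl | rfl
      · rw [hi0]; intro hc; cases hc
      · exact hkz
    calc 2 = ({hst.choose, k} : Finset (Fin p)).card := by
            rw [Finset.card_insert_of_notMem (by simpa using hk.symm),
              Finset.card_singleton]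
      _ ≤ (T j).card := Finset.card_le_card hsub
  -- column sums are zero
  have hsum : Matrix.vecMul (fun _ => (1 : ℝ)) M = 0 := by
    funext j
    simp only [Matrix.vecMul, dotProduct, one_mul, Pi.zero_apply]
    by_cases hst : ∃ i', ℳ i' j = PSym.star
    · have hi0T : hst.choose ∈ T j := by
        simp only [hT, Finset.mem_filter, Finset.mem_univ, true_and]
        rw [hst.choose_spec]; intro hc; cases hc
      have h1 : ∑ i, M i j = ∑ i ∈ T j, M i j := by
        rw [← Finset.sum_filter_add_sum_filter_not Finset.univ
          (fun i => ℳ i j ≠ PSym.zero)]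
        have : ∑ i ∈ Finset.univ.filter (fun i => ¬ ℳ i j ≠ PSym.zero), M i j = 0 := by
          apply Finset.sum_eq_zero
          intro i hi
          simp only [Finset.mem_filter, not_not] at hi
          simp [hM, hi.2]
        rw [this, add_zero]
      rw [h1, ← Finset.add_sum_erase _ _ hi0T]
      have hval0 : M hst.choose j = 1 - ((T j).card : ℝ) := by
        have hz : ℳ hst.choose j ≠ PSym.zero := by
          rw [hst.choose_spec]; intro hc; cases hc
        simp [hM, hz, hst]
      have hrest : ∑ i ∈ (T j).erase hst.choose, M i j = ((T j).card : ℝ) - 1 := by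
        have : ∀ i ∈ (T j).erase hst.choose, M i j = 1 := by
          intro i hi
          have hi' := Finset.mem_of_mem_erase hi
          have hne : i ≠ hst.choose := Finset.ne_of_mem_erase hi
          simp only [hT, Finset.mem_filter, Finset.mem_univ, true_and] at hi'
          simp [hM, hi', hst, hne]
        rw [Finset.sum_congr rfl this, Finset.sum_const, nsmul_eq_mul, mul_one,
          Finset.card_erase_of_mem hi0T, Nat.cast_sub]
        · norm_num
        · exact le_trans one_le_two (hcard j hst)
      rw [hval0, hrest]; ring
    · apply Finset.sum_eq_zero
      intro i _
      by_cases hz : ℳ i j = PSym.zero <;> simp [hM, hz, hst]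
  refine ⟨M, ?_, hsum, ?_⟩
  · intro i j
    constructor
    · intro hz; simp [hM, hz]
    · intro hs
      have hz : ℳ i j ≠ PSym.zero := by rw [hs]; intro hc; cases hc
      have hst : ∃ i', ℳ i' j = PSym.star := ⟨i, hs⟩
      have h2 := hcard j hst
      simp only [hM, hz, if_false, hst, dif_pos]
      split
      · intro hc
        have : ((T j).card : ℝ) = 1 := by linarith [sub_eq_zero.mp hc]
        have : (T j).card = 1 := by exact_mod_cast this
        omega
      · norm_num
  · intro hp hrank
    -- rows are linearly dependent since they sum to zero
    have hrows : ∑ i, M i = 0 := by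
      funext j
      have := congrFun hsum j
      rw [Finset.sum_apply]
      simpa [Matrix.vecMul, dotProduct] using this
    have hli : LinearIndependent ℝ M := by
      have := hrank
      rw [Matrix.rank_eq_finrank_span_row] at this
      rw [linearIndependent_iff_card_eq_finrank_span]
      simp only [Set.finrank, Fintype.card_fin]; exact this.symm
    have := Fintype.linearIndependent_iff.mp hli (fun _ => 1)
      (by simpa using hrows) ⟨0, hp⟩
    norm_num at this
end
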